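/- arXiv:2207.05396 — 13 statements merged into one kernel-verified Lean document; each statement's English description precedes it below -/
import Mathlib

section
/- Let B be a primitive collection of nonzero proper ideals of O_K. Then: (1) η* is an O_K-Toeplitz array; (2) η*(g) ≤ η(g) for all g ∈ O_K; and (3) X_{η*} ⊆ X_η, the set X_{η*} is minimal, and every minimal subset of X_η equals X_{η*} (that is, X_{η*} is the unique minimal subset of X_η). -/
open Set Filter Topology NumberField

namespace BFree

variable (K : Type*) [Field K] [NumberField K]

/-- The set of multiples of a collection `B` of ideals of `𝓞 K`. -/
def MB (B : Set (Ideal (𝓞 K))) : Set (𝓞 K) := {g | ∃ b ∈ B, g ∈ b}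

open Classical in
/-- The indicator function `η` of the `B`-free elements. -/
noncomputable def eta (B : Set (Ideal (𝓞 K))) : 𝓞 K → Bool :=
  fun g => if g ∈ MB K B then false else true

/-- The shift action of `𝓞 K` on `{0,1}^{𝓞 K}`. -/
def shift (g : 𝓞 K) (x : 𝓞 K → Bool) : 𝓞 K → Bool := fun h => x (h + g)

/-- The orbit of a point under the shift action. -/
def orbit (x : 𝓞 K → Bool) : Set (𝓞 K → Bool) := {y | ∃ g : 𝓞 K, y = shift K g x}

/-- The orbit closure `X_x` of a point. -/
def orbitClosure (x : 𝓞 K → Bool) : Set (𝓞 K → Bool) := closure (orbit K x)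

/-- The set of `s`-periodic positions of `x`. -/
def Per (x : 𝓞 K → Bool) (s : Ideal (𝓞 K)) : Set (𝓞 K) :=
  {g | ∀ t ∈ s, x (g + t) = x g}

/-- `x` is an `𝓞 K`-Toeplitz array. -/
def IsToeplitz (x : 𝓞 K → Bool) : Prop :=
  ∀ g : 𝓞 K, ∃ s : Ideal (𝓞 K), s ≠ ⊥ ∧ g ∈ Per K x s

/-- A collection of ideals is pairwise coprime. -/
def PairwiseCoprime (C : Set (Ideal (𝓞 K))) : Prop :=
  ∀ c ∈ C, ∀ c' ∈ C, c ≠ c' → c ⊔ c' = ⊤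

/-- The collection `D` of nonzero ideals `d` such that `d·C ⊆ B` for some infinite
pairwise coprime collection `C` of nonzero proper ideals. -/
def Dset (B : Set (Ideal (𝓞 K))) : Set (Ideal (𝓞 K)) :=
  {d | d ≠ ⊥ ∧ ∃ C : Set (Ideal (𝓞 K)), C.Infinite ∧ (∀ c ∈ C, c ≠ ⊥ ∧ c ≠ ⊤) ∧
    PairwiseCoprime K C ∧ ∀ c ∈ C, d * c ∈ B}

/-- The primitive part of a collection of ideals. -/
def primPart (A : Set (Ideal (𝓞 K))) : Set (Ideal (𝓞 K)) :=
  {a | a ∈ A ∧ ¬ ∃ a' ∈ A, a < a'}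

/-- `B* = (B ∪ D)^prim`. -/
def Bstar (B : Set (Ideal (𝓞 K))) : Set (Ideal (𝓞 K)) :=
  primPart K (B ∪ Dset K B)

/-- `η*`, the indicator function of the `B*`-free elements. -/
noncomputable def etaStar (B : Set (Ideal (𝓞 K))) : 𝓞 K → Bool :=
  eta K (Bstar K B)

/-- A set is invariant under all shifts. -/
def IsInvariant (M : Set (𝓞 K → Bool)) : Prop :=
  ∀ g : 𝓞 K, ∀ x ∈ M, shift K g x ∈ M

/-- A minimal subset of the full shift: nonempty, closed, invariant, and the orbit of
each of its points is dense in it. -/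
def IsMinimalSubset (M : Set (𝓞 K → Bool)) : Prop :=
  M.Nonempty ∧ IsClosed M ∧ IsInvariant K M ∧ ∀ x ∈ M, M ⊆ closure (orbit K x)

/-- `B` is primitive: no ideal of `B` is contained in another one. -/
def Primitive (B : Set (Ideal (𝓞 K))) : Prop :=
  ∀ b ∈ B, ∀ b' ∈ B, b ≤ b' → b = b'

end BFree

namespace BFree

set_option linter.unusedSectionVars false
set_option linter.unusedVariables false
set_option synthInstance.maxHeartbeats 1000000
set_option maxHeartbeats 1600000

variable {K : Type*} [Field K] [NumberField K]

local notation "R" => 𝓞 K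

lemma shift_shift (g g' : 𝓞 K) (x : 𝓞 K → Bool) :
    shift K g (shift K g' x) = shift K (g' + g) x := by
  funext h; simp [shift, add_assoc, add_comm g g']

lemma continuous_shift (g : 𝓞 K) : Continuous (shift K g) :=
  continuous_pi fun h => continuous_apply (h + g)

lemma mem_closure_orbit_iff {x y : 𝓞 K → Bool} :
    y ∈ closure (orbit K x) ↔ ∀ F : Finset (𝓞 K), ∃ g, ∀ h ∈ F, x (h + g) = y h := by
  constructor
  · intro hy F
    have hopen : IsOpen {z : 𝓞 K → Bool | ∀ h ∈ F, z h = y h} := by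
      have : {z : 𝓞 K → Bool | ∀ h ∈ F, z h = y h} =
          ⋂ h ∈ F, (fun z : 𝓞 K → Bool => z h) ⁻¹' {y h} := by
        ext z; simp
      rw [this]
      exact isOpen_biInter_finset fun h _ => (continuous_apply h).isOpen_preimage _ (isOpen_discrete _)
    have := (mem_closure_iff).mp hy _ hopen (fun h _ => rfl)
    obtain ⟨z, hz1, g, rfl⟩ := this
    exact ⟨g, fun h hF => hz1 h hF⟩
  · intro H
    rw [mem_closure_iff]
    intro U hU hyU
    obtain ⟨I, u, hu, hsub⟩ := isOpen_pi_iff.mp hU y hyU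
    obtain ⟨g, hg⟩ := H I
    refine ⟨shift K g x, hsub fun h hh => ?_, ⟨g, rfl⟩⟩
    have : shift K g x h = y h := hg h hh
    rw [this]
    exact (hu h hh).2

lemma shift_mem_orbit (g : 𝓞 K) (x : 𝓞 K → Bool) : shift K g x ∈ orbit K x := ⟨g, rfl⟩

lemma mem_orbit_self (x : 𝓞 K → Bool) : x ∈ orbit K x := by
  refine ⟨0, ?_⟩; funext h; simp [shift]

lemma shift_mem_closure_orbit {x z : 𝓞 K → Bool} (hz : z ∈ closure (orbit K x)) (g : 𝓞 K) :
    shift K g z ∈ closure (orbit K x) := by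
  have h1 : shift K g z ∈ shift K g '' closure (orbit K x) := ⟨z, hz, rfl⟩
  have h2 : shift K g '' closure (orbit K x) ⊆ closure (shift K g '' orbit K x) :=
    image_closure_subset_closure_image (continuous_shift g)
  refine closure_mono ?_ (h2 h1)
  rintro w ⟨v, ⟨g', rfl⟩, rfl⟩
  rw [shift_shift]; exact ⟨_, rfl⟩

lemma closure_orbit_subset {x z : 𝓞 K → Bool} (hz : z ∈ closure (orbit K x)) :
    closure (orbit K z) ⊆ closure (orbit K x) := by
  have : orbit K z ⊆ closure (orbit K x) := by
    rintro w ⟨g, rfl⟩; exact shift_mem_closure_orbit hz g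
  simpa using closure_minimal this isClosed_closure


lemma finite_quotient_of_ne_bot {a : Ideal R} (ha : a ≠ ⊥) : Finite ((𝓞 K) ⧸ a) :=
  Ideal.finiteQuotientOfFreeOfNeBot a ha

lemma finite_ideals_above {a : Ideal R} (ha : a ≠ ⊥) : {J : Ideal R | a ≤ J}.Finite := by
  have : Finite ((𝓞 K) ⧸ a) := finite_quotient_of_ne_bot ha
  have hfin : Finite (Ideal ((𝓞 K) ⧸ a)) :=
    Finite.of_injective (fun J => (J : Set ((𝓞 K) ⧸ a))) fun I J h => SetLike.coe_injective h
  have hsurj : Function.Surjective (Ideal.Quotient.mk a) := Ideal.Quotient.mk_surjective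
  have e := Ideal.relIsoOfSurjective (Ideal.Quotient.mk a) hsurj
  haveI : Finite { p : Ideal R // Ideal.comap (Ideal.Quotient.mk a) ⊥ ≤ p } := Finite.of_equiv _ e.toEquiv
  have hset : {J : Ideal R | a ≤ J} = {J : Ideal R | Ideal.comap (Ideal.Quotient.mk a) ⊥ ≤ J} := by
    ext J
    have h : Ideal.comap (Ideal.Quotient.mk a) ⊥ = a := Ideal.mk_ker
    rw [h]
  rw [hset]
  exact Set.finite_coe_iff.mp this

lemma finite_divisors {a : Ideal R} (ha : a ≠ ⊥) : {J : Ideal R | J ∣ a}.Finite := by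
  have : {J : Ideal R | J ∣ a} = {J : Ideal R | a ≤ J} := by
    ext J; exact Ideal.dvd_iff_le
  rw [this]; exact finite_ideals_above ha

/-- coset representatives -/
lemma exists_reps {m : Ideal R} (hm : m ≠ ⊥) :
    ∃ G : Finset (𝓞 K), ∀ a : 𝓞 K, ∃ r ∈ G, a + r ∈ m := by
  have : Finite ((𝓞 K) ⧸ m) := finite_quotient_of_ne_bot hm
  classical
  have := Fintype.ofFinite ((𝓞 K) ⧸ m)
  refine ⟨Finset.univ.image (fun q : (𝓞 K) ⧸ m => -(Quotient.out q : 𝓞 K)), fun a => ?_⟩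
  refine ⟨-(Quotient.out (Ideal.Quotient.mk m a) : 𝓞 K), Finset.mem_image_of_mem _ (Finset.mem_univ _), ?_⟩
  have : Ideal.Quotient.mk m (Quotient.out (Ideal.Quotient.mk m a)) = Ideal.Quotient.mk m a := by
    exact Quotient.out_eq _
  have h2 := (Ideal.Quotient.eq (I := m)).mp this.symm
  simpa [sub_eq_add_neg] using h2


lemma sup_top_of_le {a b c : Ideal R} (h : a ⊔ b = ⊤) (hbc : b ≤ c) : a ⊔ c = ⊤ :=
  eq_top_iff.mpr (le_trans (le_of_eq h.symm) (sup_le_sup_left hbc a))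

lemma finite_not_coprime {C : Set (Ideal R)}
    (hC : ∀ c ∈ C, ∀ c' ∈ C, c ≠ c' → c ⊔ c' = ⊤)
    (hCproper : ∀ c ∈ C, c ≠ ⊤) {a : Ideal R} (ha : a ≠ ⊥) :
    {c ∈ C | c ⊔ a ≠ ⊤}.Finite := by
  have hgood : Set.InjOn (fun c => c ⊔ a) {c ∈ C | c ⊔ a ≠ ⊤} := by
    intro c hc c' hc' h
    by_contra hne
    have htop := hC c hc.1 c' hc'.1 hne
    have h2 : (c ⊔ a) ⊔ (c' ⊔ a) = ⊤ := by
      rw [eq_top_iff, ← htop]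
      exact sup_le (le_trans le_sup_left le_sup_left) (le_trans le_sup_left le_sup_right)
    simp only at h
    rw [h, sup_idem] at h2
    exact hc'.2 h2
  have himg : ((fun c => c ⊔ a) '' {c ∈ C | c ⊔ a ≠ ⊤}).Finite :=
    (finite_ideals_above ha).subset (by
      rintro _ ⟨c, _, rfl⟩
      show a ≤ c ⊔ a
      exact le_sup_right)
  exact Set.Finite.of_finite_image himg hgood

lemma exists_coprime_elt {C : Set (Ideal R)} (hCinf : C.Infinite)
    (hC : ∀ c ∈ C, ∀ c' ∈ C, c ≠ c' → c ⊔ c' = ⊤)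
    (hCproper : ∀ c ∈ C, c ≠ ⊤) {a : Ideal R} (ha : a ≠ ⊥) :
    ∃ c ∈ C, c ⊔ a = ⊤ := by
  obtain ⟨c, hc⟩ := (hCinf.diff (finite_not_coprime hC hCproper ha)).nonempty
  obtain ⟨hc1, hc2⟩ := hc
  refine ⟨c, hc1, ?_⟩
  by_contra hne
  exact hc2 ⟨hc1, hne⟩

lemma pick_coprimes : ∀ (Cs : List (Set (Ideal R))) (a : Ideal R), a ≠ ⊥ →
    (∀ C ∈ Cs, C.Infinite ∧ (∀ c ∈ C, c ≠ ⊥ ∧ c ≠ ⊤) ∧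
      (∀ c ∈ C, ∀ c' ∈ C, c ≠ c' → c ⊔ c' = ⊤)) →
    ∃ cs : List (Ideal R), List.Forall₂ (· ∈ ·) cs Cs ∧
      (∀ c ∈ cs, c ⊔ a = ⊤) ∧ cs.Pairwise (fun x y => x ⊔ y = ⊤)
  | [], a, _, _ => ⟨[], List.Forall₂.nil, by simp, List.Pairwise.nil⟩
  | C :: Cs, a, ha, hCs => by
    obtain ⟨hCinf, hCel, hCcop⟩ := hCs C List.mem_cons_self
    obtain ⟨c, hcC, hca⟩ := exists_coprime_elt hCinf hCcop (fun c hc => (hCel c hc).2) ha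
    have hc0 : c ≠ ⊥ := (hCel c hcC).1
    have hac : a * c ≠ ⊥ := by
      intro h
      rcases Ideal.mul_eq_bot.mp h with h | h
      exacts [ha h, hc0 h]
    obtain ⟨cs, hmem, hcop_a, hpair⟩ :=
      pick_coprimes Cs (a * c) hac (fun C' hC' => hCs C' (List.mem_cons_of_mem _ hC'))
    refine ⟨c :: cs, List.Forall₂.cons hcC hmem, ?_, ?_⟩
    · intro x hx
      rcases List.mem_cons.mp hx with rfl | hx
      · exact hca
      · exact sup_top_of_le (hcop_a x hx) Ideal.mul_le_left
    · refine List.Pairwise.cons (fun y hy => ?_) hpair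
      have h3 := hcop_a y hy
      rw [sup_comm]
      exact sup_top_of_le h3 Ideal.mul_le_right

lemma crt {n : ℕ} (f : Fin n → Ideal R) (hf : ∀ i j, i ≠ j → f i ⊔ f j = ⊤) (t : Fin n → 𝓞 K) :
    ∃ g : 𝓞 K, ∀ i, g - t i ∈ f i :=
  Ideal.exists_forall_sub_mem_ideal
    (fun i j hij => Ideal.isCoprime_iff_sup_eq.mpr (hf i j hij)) t


open UniqueFactorizationMonoid Multiset in
/-- The main combinatorial lemma. -/
lemma ML_B {B : Set (Ideal R)} (hB : ∀ b ∈ B, b ≠ ⊥ ∧ b ≠ ⊤) (g : 𝓞 K)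
    (hg : g ∉ MB K (B ∪ Dset K B)) :
    ∃ s : Ideal R, s ≠ ⊥ ∧ ∀ b ∈ B, g ∉ s ⊔ b := by
  classical
  by_contra hcon
  push_neg at hcon
  -- hcon : ∀ s, s ≠ ⊥ → ∃ b ∈ B, g ∈ s ⊔ b
  have htb : (⊤ : Ideal R) ≠ ⊥ := by
    simp [bot_lt_top.ne']
  have hg0 : g ≠ 0 := by
    rintro rfl
    obtain ⟨b, hbB, -⟩ := hcon ⊤ htb
    exact hg ⟨b, Or.inl hbB, zero_mem b⟩
  set I₀ : Ideal R := Ideal.span {g} with hI₀def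
  have hI₀ : I₀ ≠ ⊥ := by simpa [hI₀def, Ideal.span_singleton_eq_bot] using hg0
  have hgI₀ : g ∈ I₀ := Ideal.mem_span_singleton_self g
  -- the persistent divisor d
  set DS : Ideal R → Set (Ideal R) :=
    fun s => {J | ∃ b ∈ B, g ∈ s ⊔ b ∧ b ⊔ I₀ = J} with hDSdef
  have hDSsub : ∀ s, DS s ⊆ {J : Ideal R | I₀ ≤ J} := by
    rintro s J ⟨b, hb, hgb, rfl⟩
    show I₀ ≤ b ⊔ I₀
    exact le_sup_right
  have hDSfin : ∀ s, (DS s).Finite := fun s => (finite_ideals_above hI₀).subset (hDSsub s)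
  have hDSne : ∀ s, s ≠ ⊥ → (DS s).Nonempty := by
    intro s hs
    obtain ⟨b, hbB, hgb⟩ := hcon s hs
    exact ⟨b ⊔ I₀, b, hbB, hgb, rfl⟩
  have hDSmono : ∀ s s' : Ideal R, s ≤ s' → DS s ⊆ DS s' := by
    rintro s s' hss J ⟨b, hb, hgb, rfl⟩
    exact ⟨b, hb, sup_le_sup_right hss b hgb, rfl⟩
  -- minimal cardinality
  set N : Set ℕ := {n | ∃ s : Ideal R, s ≠ ⊥ ∧ (DS s).ncard = n} with hNdef
  have hNne : N.Nonempty := ⟨(DS ⊤).ncard, ⊤, htb, rfl⟩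
  obtain ⟨s₀, hs₀, hs₀card⟩ : sInf N ∈ N := Nat.sInf_mem hNne
  have hkey : ∀ s : Ideal R, s ≠ ⊥ → DS s₀ ⊆ DS s := by
    intro s hs
    have hss₀ : s * s₀ ≠ ⊥ := by
      intro h; rcases Ideal.mul_eq_bot.mp h with h | h
      exacts [hs h, hs₀ h]
    have h1 : DS (s * s₀) ⊆ DS s₀ := hDSmono _ _ Ideal.mul_le_right
    have h2 : DS (s * s₀) ⊆ DS s := hDSmono _ _ Ideal.mul_le_left
    have hle : sInf N ≤ (DS (s * s₀)).ncard := Nat.sInf_le ⟨s * s₀, hss₀, rfl⟩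
    have heq : DS (s * s₀) = DS s₀ :=
      Set.eq_of_subset_of_ncard_le h1 (by rw [hs₀card]; exact hle) (hDSfin s₀)
    rw [← heq]; exact h2
  obtain ⟨d, hd₀mem⟩ := hDSne s₀ hs₀
  have hd : ∀ s : Ideal R, s ≠ ⊥ → ∃ b ∈ B, g ∈ s ⊔ b ∧ b ⊔ I₀ = d :=
    fun s hs => hkey s hs hd₀mem
  have hdI₀ : I₀ ≤ d := hDSsub s₀ hd₀mem
  have hd0 : d ≠ ⊥ := fun h => hI₀ (le_bot_iff.mp (h ▸ hdI₀))
  have hddvd : d ∣ I₀ := Ideal.dvd_iff_le.mpr hdI₀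
  -- the inductive step
  have Hstep : ∀ P : Finset (Ideal R), (∀ p ∈ P, Prime p) →
      ∃ c : Ideal R, d * c ∈ B ∧ c ≠ ⊥ ∧
        ∀ p ∈ P, (normalizedFactors (d * c)).count p ≤ (normalizedFactors I₀).count p := by
    intro P hP
    set m : Ideal R := P.prod id with hmdef
    have hm : m ≠ ⊥ := by
      rw [hmdef, ← Ideal.zero_eq_bot]
      exact Finset.prod_ne_zero_iff.mpr fun p hp => by
        rw [Ideal.zero_eq_bot, id]
        exact (hP p hp).ne_zero
    have hs : I₀ * m ≠ ⊥ := by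
      intro h; rcases Ideal.mul_eq_bot.mp h with h | h
      exacts [hI₀ h, hm h]
    obtain ⟨b, hbB, hgmem, hbd⟩ := hd (I₀ * m) hs
    have hbled : b ≤ d := le_trans le_sup_left (le_of_eq hbd)
    obtain ⟨c, rfl⟩ : d ∣ b := Ideal.dvd_iff_le.mpr hbled
    have hb0 : d * c ≠ ⊥ := (hB _ hbB).1
    have hc0 : c ≠ ⊥ := fun h => hb0 (by rw [h]; exact Ideal.mul_bot d)
    refine ⟨c, hbB, hc0, ?_⟩
    intro p hp
    by_contra hgt
    push_neg at hgt
    set α := (normalizedFactors I₀).count p with hα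
    have hppr : Prime p := hP p hp
    have h1 : p ^ (α + 1) ∣ d * c := by
      have hrep : Multiset.replicate (α + 1) p ≤ normalizedFactors (d * c) :=
        Multiset.le_count_iff_replicate_le.mp hgt
      have := Multiset.prod_dvd_prod_of_le hrep
      rw [Multiset.prod_replicate] at this
      exact this.trans (associated_iff_eq.mp (prod_normalizedFactors hb0)).dvd
    have h2 : p ^ (α + 1) ∣ I₀ * m := by
      have hpa : p ^ α ∣ I₀ := by
        have hrep : Multiset.replicate α p ≤ normalizedFactors I₀ :=
          Multiset.le_count_iff_replicate_le.mp (le_of_eq hα)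
        have := Multiset.prod_dvd_prod_of_le hrep
        rw [Multiset.prod_replicate] at this
        exact this.trans (associated_iff_eq.mp (prod_normalizedFactors hI₀)).dvd
      have hpm : p ∣ m := by
        have := Finset.dvd_prod_of_mem id hp
        simpa [hmdef] using this
      rw [pow_succ]
      exact mul_dvd_mul hpa hpm
    have h3 : I₀ ≤ p ^ (α + 1) := by
      have hsup : I₀ * m ⊔ d * c ≤ p ^ (α + 1) :=
        sup_le (Ideal.le_of_dvd h2) (Ideal.le_of_dvd h1)
      exact le_trans ((Ideal.span_singleton_le_iff_mem _).mpr hgmem) hsup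
    have h4 : α + 1 ≤ α := by
      have hdvd : p ^ (α + 1) ∣ I₀ := Ideal.dvd_iff_le.mpr h3
      have hppow : p ^ (α + 1) ≠ 0 := pow_ne_zero _ hppr.ne_zero
      have hle := (dvd_iff_normalizedFactors_le_normalizedFactors hppow hI₀).mp hdvd
      have hcount := Multiset.count_le_of_le p hle
      have hfac : normalizedFactors (p ^ (α + 1)) = Multiset.replicate (α + 1) p := by
        have h5 : normalizedFactors p = {p} := by
          have := normalizedFactors_prod_of_prime (m := ({p} : Multiset (Ideal R)))
            (by simpa using hppr)
          simpa using this
        rw [normalizedFactors_pow, h5]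
        ext q
        simp [Multiset.count_nsmul, Multiset.count_replicate, Multiset.count_singleton]
        split <;> simp_all
      rw [hfac, Multiset.count_replicate_self] at hcount
      exact hcount
    omega
  -- recursive construction of the coprime family
  have hd0' : d ≠ 0 := by simpa [Ideal.zero_eq_bot] using hd0
  set Q₀ : Finset (Ideal R) := (normalizedFactors I₀).toFinset with hQ₀def
  have hQ₀pr : ∀ p ∈ Q₀, Prime p := fun p hp =>
    prime_of_normalized_factor p (Multiset.mem_toFinset.mp hp)
  let T := {P : Finset (Ideal R) // ∀ p ∈ P, Prime p}
  let nxt : T → Ideal R := fun P => Classical.choose (Hstep P.1 P.2)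
  have hnxt : ∀ P : T, d * nxt P ∈ B ∧ nxt P ≠ ⊥ ∧
      ∀ p ∈ P.1, (normalizedFactors (d * nxt P)).count p ≤ (normalizedFactors I₀).count p :=
    fun P => Classical.choose_spec (Hstep P.1 P.2)
  have hstep_pr : ∀ P : T, ∀ p ∈ P.1 ∪ (normalizedFactors (d * nxt P)).toFinset, Prime p := by
    intro P p hp
    rcases Finset.mem_union.mp hp with h | h
    · exact P.2 p h
    · exact prime_of_normalized_factor p (Multiset.mem_toFinset.mp h)
  let S : ℕ → T := fun n =>
    Nat.rec ⟨Q₀, hQ₀pr⟩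
      (fun _ P => ⟨P.1 ∪ (normalizedFactors (d * nxt P)).toFinset, hstep_pr P⟩) n
  set c : ℕ → Ideal R := fun n => nxt (S n) with hcdef
  have hc : ∀ n, d * c n ∈ B ∧ c n ≠ ⊥ ∧
      ∀ p ∈ (S n).1, (normalizedFactors (d * c n)).count p ≤ (normalizedFactors I₀).count p :=
    fun n => hnxt (S n)
  have hS0 : (S 0).1 = Q₀ := rfl
  have hSsucc : ∀ n, (S (n + 1)).1 = (S n).1 ∪ (normalizedFactors (d * c n)).toFinset :=
    fun n => rfl
  have hSstep : ∀ n, (S n).1 ⊆ (S (n + 1)).1 := by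
    intro n; rw [hSsucc n]; exact Finset.subset_union_left
  have hSmono : ∀ n m, n ≤ m → (S n).1 ⊆ (S m).1 := by
    intro n m h
    induction h with
    | refl => exact subset_rfl
    | step h ih => exact ih.trans (hSstep _)
  have hQ₀sub : ∀ n, Q₀ ⊆ (S n).1 := fun n => hS0 ▸ hSmono 0 n (Nat.zero_le n)
  have hfac_sub : ∀ n, (normalizedFactors (d * c n)).toFinset ⊆ (S (n + 1)).1 := by
    intro n; rw [hSsucc n]; exact Finset.subset_union_right
  have hcn0 : ∀ n, c n ≠ ⊥ := fun n => (hc n).2.1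
  have hcn0' : ∀ n, c n ≠ 0 := fun n => by simpa [Ideal.zero_eq_bot] using hcn0 n
  have hdcn0 : ∀ n, d * c n ≠ 0 := fun n => mul_ne_zero hd0' (hcn0' n)
  -- split into the Q₀-part and the rest
  set u : ℕ → Ideal R := fun n => ((normalizedFactors (c n)).filter (· ∈ Q₀)).prod with hudef
  set w : ℕ → Ideal R := fun n =>
    ((normalizedFactors (c n)).filter (fun q => q ∉ Q₀)).prod with hwdef
  have hupr : ∀ n, ∀ q ∈ (normalizedFactors (c n)).filter (· ∈ Q₀), Prime q :=
    fun n q hq => prime_of_normalized_factor q (Multiset.mem_of_mem_filter hq)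
  have hwpr : ∀ n, ∀ q ∈ (normalizedFactors (c n)).filter (fun q => q ∉ Q₀), Prime q :=
    fun n q hq => prime_of_normalized_factor q (Multiset.mem_of_mem_filter hq)
  have hu0 : ∀ n, u n ≠ 0 := fun n => Multiset.prod_ne_zero_of_prime _ (hupr n)
  have hw0 : ∀ n, w n ≠ 0 := fun n => Multiset.prod_ne_zero_of_prime _ (hwpr n)
  have hufac : ∀ n, normalizedFactors (u n) = (normalizedFactors (c n)).filter (· ∈ Q₀) :=
    fun n => normalizedFactors_prod_of_prime (hupr n)
  have hwfac : ∀ n,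
      normalizedFactors (w n) = (normalizedFactors (c n)).filter (fun q => q ∉ Q₀) :=
    fun n => normalizedFactors_prod_of_prime (hwpr n)
  have huw : ∀ n, u n * w n = c n := by
    intro n
    rw [hudef, hwdef, ← Multiset.prod_add, Multiset.filter_add_not]
    exact associated_iff_eq.mp (prod_normalizedFactors (hcn0' n))
  have claimA : ∀ n, d * u n ∣ I₀ := by
    intro n
    rw [dvd_iff_normalizedFactors_le_normalizedFactors (mul_ne_zero hd0' (hu0 n)) hI₀,
      normalizedFactors_mul hd0' (hu0 n), hufac n, Multiset.le_iff_count]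
    intro q
    rw [Multiset.count_add, Multiset.count_filter]
    have hdle : (normalizedFactors d).count q ≤ (normalizedFactors I₀).count q :=
      Multiset.count_le_of_le q
        ((dvd_iff_normalizedFactors_le_normalizedFactors hd0' hI₀).mp hddvd)
    by_cases hq : q ∈ Q₀
    · rw [if_pos hq]
      have h1 : (normalizedFactors d).count q + (normalizedFactors (c n)).count q =
          (normalizedFactors (d * c n)).count q := by
        rw [normalizedFactors_mul hd0' (hcn0' n), Multiset.count_add]
      rw [h1]
      exact (hc n).2.2 q (hQ₀sub n hq)
    · rw [if_neg hq]
      omega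
  have claimGmem : ∀ n, g ∈ d * u n := fun n => Ideal.le_of_dvd (claimA n) hgI₀
  have claimC : ∀ n, w n ≠ ⊤ := by
    intro n hwtop
    have hun : u n = c n := by rw [← huw n, hwtop, Ideal.mul_top]
    exact hg ⟨d * c n, Or.inl (hc n).1, hun ▸ claimGmem n⟩
  have claimB : ∀ n m, n < m → ∀ q, q ∈ normalizedFactors (c n) → q ∉ Q₀ →
      (normalizedFactors (c m)).count q = 0 := by
    intro n m hnm q hqn hqQ
    have hq_in : q ∈ (normalizedFactors (d * c n)).toFinset := by
      rw [Multiset.mem_toFinset, normalizedFactors_mul hd0' (hcn0' n)]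
      exact Multiset.mem_add.mpr (Or.inr hqn)
    have hq_S : q ∈ (S m).1 := hSmono (n + 1) m hnm (hfac_sub n hq_in)
    have hcount := (hc m).2.2 q hq_S
    have hI0q : (normalizedFactors I₀).count q = 0 :=
      Multiset.count_eq_zero.mpr fun h => hqQ (Multiset.mem_toFinset.mpr h)
    have h2 : (normalizedFactors (c m)).count q ≤ (normalizedFactors (d * c m)).count q := by
      rw [normalizedFactors_mul hd0' (hcn0' m), Multiset.count_add]
      omega
    omega
  have claimD : ∀ n m, n < m → w n ⊔ w m = ⊤ := by
    intro n m hnm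
    by_contra hne
    obtain ⟨M, hMmax, hMge⟩ := Ideal.exists_le_maximal _ hne
    have hwn0 : w n ≠ ⊥ := by simpa [Ideal.zero_eq_bot] using hw0 n
    have hM0 : M ≠ ⊥ := by
      rintro rfl
      exact hwn0 (le_bot_iff.mp (le_trans le_sup_left hMge))
    have hMpr : Prime M := Ideal.prime_of_isPrime hM0 hMmax.isPrime
    have hMn : M ∈ normalizedFactors (w n) :=
      (mem_normalizedFactors_iff (hw0 n)).mpr
        ⟨hMpr, Ideal.dvd_iff_le.mpr (le_trans le_sup_left hMge)⟩
    have hMm : M ∈ normalizedFactors (w m) :=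
      (mem_normalizedFactors_iff (hw0 m)).mpr
        ⟨hMpr, Ideal.dvd_iff_le.mpr (le_trans le_sup_right hMge)⟩
    rw [hwfac] at hMn hMm
    have hMcn : M ∈ normalizedFactors (c n) := (Multiset.mem_filter.mp hMn).1
    have hMQ : M ∉ Q₀ := by
      have := (Multiset.mem_filter.mp hMn).2
      simpa using this
    have hz := claimB n m hnm M hMcn hMQ
    have hMcm : M ∈ normalizedFactors (c m) := (Multiset.mem_filter.mp hMm).1
    rw [Multiset.count_eq_zero] at hz
    exact hz hMcm
  -- pigeonhole on the Q₀-part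
  have hudvd : ∀ n, u n ∣ I₀ := fun n => (dvd_mul_left (u n) d).trans (claimA n)
  haveI hfinsub : Finite ↥{J : Ideal R | J ∣ I₀} := (finite_divisors hI₀).to_subtype
  let φ : ℕ → ↥{J : Ideal R | J ∣ I₀} := fun n => ⟨u n, hudvd n⟩
  obtain ⟨u₀, hu₀⟩ := Finite.exists_infinite_fiber φ
  have hNinf : (φ ⁻¹' {u₀}).Infinite := Set.infinite_coe_iff.mp hu₀
  set N' : Set ℕ := φ ⁻¹' {u₀} with hN'def
  have huEq : ∀ n ∈ N', u n = (u₀ : Ideal R) := by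
    intro n hn
    have : φ n = u₀ := hn
    exact congrArg Subtype.val this
  have hwinj : Set.InjOn w N' := by
    intro n hn m hm heq
    by_contra hne
    rcases lt_or_gt_of_ne hne with h | h
    · have := claimD n m h
      rw [heq, sup_idem] at this
      exact claimC m this
    · have := claimD m n h
      rw [heq, sup_idem] at this
      exact claimC m this
  have hCinf : (w '' N').Infinite := hNinf.image hwinj
  have hu₀0 : (u₀ : Ideal R) ≠ ⊥ := by
    intro h
    apply hI₀
    have : (u₀ : Ideal R) ∣ I₀ := u₀.2
    rw [h] at this
    rw [← Ideal.zero_eq_bot]; exact (zero_dvd_iff.mp (by simpa [Ideal.zero_eq_bot] using this))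
  have hDmem : d * (u₀ : Ideal R) ∈ Dset K B := by
    refine ⟨?_, w '' N', hCinf, ?_, ?_, ?_⟩
    · intro h
      rcases Ideal.mul_eq_bot.mp h with h | h
      exacts [hd0 h, hu₀0 h]
    · rintro x ⟨n, hn, rfl⟩
      exact ⟨by simpa [Ideal.zero_eq_bot] using hw0 n, claimC n⟩
    · rintro x ⟨n, hn, rfl⟩ y ⟨m, hm, rfl⟩ hxy
      have hnm : n ≠ m := by rintro rfl; exact hxy rfl
      rcases lt_or_gt_of_ne hnm with h | h
      · exact claimD n m h
      · rw [sup_comm]; exact claimD m n h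
    · rintro x ⟨n, hn, rfl⟩
      have hx : d * (u₀ : Ideal R) * w n = d * c n := by
        rw [mul_assoc, ← huEq n hn, huw n]
      rw [hx]
      exact (hc n).1
  obtain ⟨n₀, hn₀⟩ := hNinf.nonempty
  refine hg ⟨d * (u₀ : Ideal R), Or.inr hDmem, ?_⟩
  rw [← huEq n₀ hn₀]
  exact claimGmem n₀


lemma MB_mono {A A' : Set (Ideal R)} (h : A ⊆ A') : MB K A ⊆ MB K A' := by
  rintro g ⟨b, hb, hgb⟩; exact ⟨b, h hb, hgb⟩

lemma exists_primPart_ge {A : Set (Ideal R)} {a : Ideal R} (ha : a ∈ A) :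
    ∃ a' ∈ primPart K A, a ≤ a' := by
  have hmax := (set_has_maximal_iff_noetherian.mpr
    (inferInstance : IsNoetherian (𝓞 K) (𝓞 K))) {x | x ∈ A ∧ a ≤ x} ⟨a, ha, le_rfl⟩
  obtain ⟨a', ⟨ha'A, haa'⟩, hmax'⟩ := hmax
  refine ⟨a', ⟨ha'A, ?_⟩, haa'⟩
  rintro ⟨a'', ha''A, hlt⟩
  exact hmax' a'' ⟨ha''A, le_trans haa' hlt.le⟩ hlt

lemma MB_Bstar_eq (B : Set (Ideal R)) :
    MB K (Bstar K B) = MB K (B ∪ Dset K B) := by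
  apply Set.Subset.antisymm
  · exact MB_mono fun a ha => ha.1
  · rintro g ⟨a, haBD, hga⟩
    obtain ⟨a', ha', haa'⟩ := exists_primPart_ge (K := K) haBD
    exact ⟨a', ha', haa' hga⟩

lemma eta_eq_true_iff {B : Set (Ideal R)} {g : 𝓞 K} : eta K B g = true ↔ g ∉ MB K B := by
  unfold eta
  by_cases h : g ∈ MB K B <;> simp [h]

lemma eta_eq_false_iff {B : Set (Ideal R)} {g : 𝓞 K} : eta K B g = false ↔ g ∈ MB K B := by
  unfold eta
  by_cases h : g ∈ MB K B <;> simp [h]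

lemma etaStar_le_eta' (B : Set (Ideal R)) (g : 𝓞 K) : etaStar K B g ≤ eta K B g := by
  rcases heq : eta K B g with _ | _
  · have hmem : g ∈ MB K B := eta_eq_false_iff.mp heq
    have : g ∈ MB K (Bstar K B) := by
      rw [MB_Bstar_eq]
      exact MB_mono Set.subset_union_left hmem
    have : etaStar K B g = false := eta_eq_false_iff.mpr this
    simp [this]
  · simp

lemma Bstar_ne_bot {B : Set (Ideal R)} (hB : ∀ b ∈ B, b ≠ ⊥ ∧ b ≠ ⊤) :
    ∀ b ∈ Bstar K B, b ≠ ⊥ := by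
  rintro b ⟨hb, -⟩
  rcases hb with hb | hb
  · exact (hB b hb).1
  · exact hb.1

/-- Membership of a sum element in a sup of ideals. -/
lemma mem_sup_of_add {s b : Ideal R} {x y : 𝓞 K} (hx : x ∈ s) (hy : y ∈ b) :
    x + y ∈ s ⊔ b :=
  add_mem (Submodule.mem_sup_left hx) (Submodule.mem_sup_right hy)

/-- The full coset-freeness lemma: around every `B ∪ D`-free point there is a whole
coset free of multiples of `B ∪ D`. -/
lemma exists_free_coset {B : Set (Ideal R)} (hB : ∀ b ∈ B, b ≠ ⊥ ∧ b ≠ ⊤) (g : 𝓞 K)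
    (hg : g ∉ MB K (B ∪ Dset K B)) :
    ∃ s : Ideal R, s ≠ ⊥ ∧ ∀ t ∈ s, g + t ∉ MB K (B ∪ Dset K B) := by
  obtain ⟨s, hs, hsB⟩ := ML_B hB g hg
  refine ⟨s, hs, ?_⟩
  rintro t ht ⟨a, haBD, hga⟩
  have hgmem : ∀ J : Ideal R, g + t ∈ J → g ∈ s ⊔ J := by
    intro J hJ
    have h1 : (-t) + (g + t) ∈ s ⊔ J := mem_sup_of_add (neg_mem ht) hJ
    simpa [neg_add_cancel_comm_assoc] using h1
  rcases haBD with haB | haD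
  · exact hsB a haB (hgmem a hga)
  · obtain ⟨hd0, C, hCinf, hCel, hCcop, hCB⟩ := haD
    obtain ⟨c, hcC, hcs⟩ := exists_coprime_elt hCinf hCcop (fun c hc => (hCel c hc).2) hs
    have hle : a ≤ s ⊔ a * c := by
      have h1 : a * (c ⊔ s) = a * c ⊔ a * s := Ideal.mul_sup a c s
      rw [hcs, Ideal.mul_top] at h1
      have hA : a * c ≤ s ⊔ a * c := le_sup_right
      have hBs : a * s ≤ s := Ideal.mul_le_right
      have hB2 : a * s ≤ s ⊔ a * c := le_trans hBs le_sup_left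
      calc a = a * c ⊔ a * s := h1
        _ ≤ s ⊔ a * c := sup_le hA hB2
    have h2 : g + t ∈ s ⊔ a * c := hle hga
    have h3 : g ∈ s ⊔ (s ⊔ a * c) := by
      have := mem_sup_of_add (neg_mem ht) h2
      simpa [neg_add_cancel_comm_assoc] using this
    rw [← sup_assoc, sup_idem] at h3
    exact hsB (a * c) (hCB c hcC) h3

lemma etaStar_toeplitz {B : Set (Ideal R)} (hB : ∀ b ∈ B, b ≠ ⊥ ∧ b ≠ ⊤) (g : 𝓞 K) :
    ∃ s : Ideal R, s ≠ ⊥ ∧ ∀ t ∈ s, etaStar K B (g + t) = etaStar K B g := by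
  by_cases hmem : g ∈ MB K (Bstar K B)
  · obtain ⟨b, hbB, hgb⟩ := hmem
    refine ⟨b, Bstar_ne_bot hB b hbB, ?_⟩
    intro t ht
    have h1 : etaStar K B (g + t) = false :=
      eta_eq_false_iff.mpr ⟨b, hbB, add_mem hgb ht⟩
    have h2 : etaStar K B g = false := eta_eq_false_iff.mpr ⟨b, hbB, hgb⟩
    rw [h1, h2]
  · have hg' : g ∉ MB K (B ∪ Dset K B) := by rwa [MB_Bstar_eq] at hmem
    obtain ⟨s, hs, hfree⟩ := exists_free_coset hB g hg'
    refine ⟨s, hs, ?_⟩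
    intro t ht
    have h1 : etaStar K B (g + t) = true := by
      rw [etaStar, eta_eq_true_iff, MB_Bstar_eq]
      exact hfree t ht
    have h2 : etaStar K B g = true := eta_eq_true_iff.mpr hmem
    rw [h1, h2]


lemma key_window {B : Set (Ideal R)} (hB : ∀ b ∈ B, b ≠ ⊥ ∧ b ≠ ⊤) (F : Finset (𝓞 K)) :
    ∃ m : Ideal R, m ≠ ⊥ ∧ ∃ g₁ : 𝓞 K, ∀ t ∈ m, ∀ h ∈ F,
      eta K B (h + (g₁ + t)) = etaStar K B h := by
  classical
  set sfun : 𝓞 K → Ideal R := fun h =>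
    if hh : h ∉ MB K (B ∪ Dset K B) then (exists_free_coset hB h hh).choose else ⊤ with hsfundef
  have hsfun : ∀ h, (hh : h ∉ MB K (B ∪ Dset K B)) →
      sfun h ≠ ⊥ ∧ ∀ t ∈ sfun h, h + t ∉ MB K (B ∪ Dset K B) := by
    intro h hh
    simp only [hsfundef, dif_pos hh]
    exact (exists_free_coset hB h hh).choose_spec
  set bst : 𝓞 K → Ideal R := fun h =>
    if hh : h ∈ MB K (Bstar K B) then hh.choose else ⊤ with hbstdef
  have hbst : ∀ h, (hh : h ∈ MB K (Bstar K B)) → bst h ∈ Bstar K B ∧ h ∈ bst h := by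
    intro h hh
    simp only [hbstdef, dif_pos hh]
    exact ⟨hh.choose_spec.1, hh.choose_spec.2⟩
  set φ : 𝓞 K → Ideal R := fun h => if etaStar K B h = true then sfun h else bst h with hφdef
  set sbase : Ideal R := ∏ h ∈ F, φ h with hsbase
  have hmemtrue : ∀ h, etaStar K B h = true → h ∉ MB K (B ∪ Dset K B) := by
    intro h hh
    rw [← MB_Bstar_eq]
    exact eta_eq_true_iff.mp hh
  have hmemfalse : ∀ h, etaStar K B h = false → h ∈ MB K (Bstar K B) := fun h hh =>
    eta_eq_false_iff.mp hh
  have hφ0 : ∀ h ∈ F, φ h ≠ ⊥ := by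
    intro h hF
    by_cases hh : etaStar K B h = true
    · simp only [hφdef, if_pos hh]
      exact (hsfun h (hmemtrue h hh)).1
    · simp only [hφdef, if_neg hh]
      exact Bstar_ne_bot hB _ (hbst h (hmemfalse h (by simpa using hh))).1
  have hsbase0 : sbase ≠ ⊥ := by
    rw [hsbase, ← Ideal.zero_eq_bot]
    exact Finset.prod_ne_zero_iff.mpr fun h hF => by
      rw [Ideal.zero_eq_bot]; exact hφ0 h hF
  have hsle : ∀ h ∈ F, sbase ≤ φ h := fun h hF =>
    Ideal.le_of_dvd (Finset.dvd_prod_of_mem φ hF)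
  -- the D-part
  set FD : Finset (𝓞 K) := F.filter (fun h => etaStar K B h = false ∧ bst h ∉ B) with hFDdef
  have hFDspec : ∀ h ∈ FD, bst h ∈ Dset K B ∧ h ∈ bst h := by
    intro h hFD
    rw [hFDdef, Finset.mem_filter] at hFD
    obtain ⟨hb1, hb2⟩ := hbst h (hmemfalse h hFD.2.1)
    rcases hb1.1 with h1 | h1
    · exact absurd h1 hFD.2.2
    · exact ⟨h1, hb2⟩
  set Cs : 𝓞 K → Set (Ideal R) := fun h =>
    if hh : bst h ∈ Dset K B then hh.2.choose else ∅ with hCsdef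
  have hCs : ∀ h, (hh : bst h ∈ Dset K B) → (Cs h).Infinite ∧
      (∀ c ∈ Cs h, c ≠ ⊥ ∧ c ≠ ⊤) ∧
      (∀ c ∈ Cs h, ∀ c' ∈ Cs h, c ≠ c' → c ⊔ c' = ⊤) ∧ ∀ c ∈ Cs h, bst h * c ∈ B := by
    intro h hh
    simp only [hCsdef, dif_pos hh]
    obtain ⟨h1, h2, h3, h4⟩ := hh.2.choose_spec
    exact ⟨h1, h2, h3, h4⟩
  set L : List (𝓞 K) := FD.toList with hLdef
  have hLD : ∀ h ∈ L, bst h ∈ Dset K B ∧ h ∈ bst h := fun h hh =>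
    hFDspec h (Finset.mem_toList.mp hh)
  obtain ⟨cs, hcs_mem, hcs_cop, hcs_pair⟩ := pick_coprimes (L.map Cs) sbase hsbase0 (by
    intro C hC
    rw [List.mem_map] at hC
    obtain ⟨h, hhL, rfl⟩ := hC
    obtain ⟨u1, u2, u3, -⟩ := hCs h (hLD h hhL).1
    exact ⟨u1, u2, u3⟩)
  have hlen : cs.length = L.length := hcs_mem.length_eq.trans (List.length_map Cs)
  have hget : ∀ (i : ℕ) (hi : i < L.length), cs.get ⟨i, by omega⟩ ∈ Cs (L.get ⟨i, hi⟩) := by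
    intro i hi
    have := (List.forall₂_iff_get.mp hcs_mem).2 i (by omega) (by rw [List.length_map]; omega)
    simpa using this
  set n := L.length with hn
  -- CRT data as lists
  set flist : List (Ideal R) := sbase :: cs with hflistdef
  set tlist : List (𝓞 K) := 0 :: L.map (fun h => -h) with htlistdef
  have hflen : flist.length = n + 1 := by simp [hflistdef, hlen]
  have htlen : tlist.length = n + 1 := by simp [htlistdef, hn]
  set f : Fin (n + 1) → Ideal R := fun i => flist.get ⟨i, by rw [hflen]; exact i.isLt⟩
    with hfdef
  set tv : Fin (n + 1) → 𝓞 K := fun i => tlist.get ⟨i, by rw [htlen]; exact i.isLt⟩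
    with htvdef
  have hflist_pair : flist.Pairwise (fun x y => x ⊔ y = ⊤) := by
    refine List.Pairwise.cons (fun y hy => ?_) hcs_pair
    rw [sup_comm]
    exact hcs_cop y hy
  have hcop : ∀ i j : Fin (n + 1), i ≠ j → f i ⊔ f j = ⊤ := by
    intro i j hij
    have hij' : (i : ℕ) ≠ (j : ℕ) := fun hc => hij (Fin.ext hc)
    rcases lt_or_gt_of_ne hij' with hlt | hlt
    · exact List.pairwise_iff_get.mp hflist_pair ⟨i, by omega⟩ ⟨j, by omega⟩ hlt
    · rw [sup_comm]
      exact List.pairwise_iff_get.mp hflist_pair ⟨j, by omega⟩ ⟨i, by omega⟩ hlt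
  obtain ⟨g₁, hg₁⟩ := crt f hcop tv
  have hg₁base : g₁ ∈ sbase := by
    have h0 := hg₁ ⟨0, Nat.succ_pos n⟩
    have h0' : g₁ - 0 ∈ sbase := h0
    rwa [sub_zero] at h0'
  have hg₁c : ∀ (i : ℕ) (hi : i < n), g₁ + L.get ⟨i, hi⟩ ∈ cs.get ⟨i, by omega⟩ := by
    intro i hi
    have h0 := hg₁ ⟨i + 1, by omega⟩
    have h0' : g₁ - (L.map (fun h => -h)).get ⟨i, by simpa using hi⟩ ∈ cs.get ⟨i, by omega⟩ := h0
    simp only [List.get_eq_getElem, List.getElem_map] at h0'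
    simpa [sub_neg_eq_add] using h0'
  -- the modulus
  set m : Ideal R := sbase * cs.prod with hmdef
  have hcs0 : (0 : Ideal R) ∉ cs := by
    intro h0
    obtain ⟨i, hieq⟩ := List.mem_iff_get.mp h0
    have hi' : (i : ℕ) < L.length := by omega
    have hmem : cs.get ⟨(i : ℕ), by omega⟩ ∈ Cs (L.get ⟨(i : ℕ), hi'⟩) := hget i hi'
    have hmk : (⟨(i : ℕ), by omega⟩ : Fin cs.length) = i := Fin.ext rfl
    rw [hmk, hieq] at hmem
    have hD := (hLD (L.get ⟨(i : ℕ), hi'⟩) (List.get_mem L _)).1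
    have := ((hCs _ hD).2.1) 0 hmem
    exact this.1 Ideal.zero_eq_bot
  have hm0 : m ≠ ⊥ := by
    rw [hmdef, ← Ideal.zero_eq_bot]
    exact mul_ne_zero (by rw [Ideal.zero_eq_bot]; exact hsbase0) (List.prod_ne_zero hcs0)
  have hmbase : m ≤ sbase := Ideal.mul_le_left
  have hmcs : ∀ (j : ℕ) (hj : j < cs.length), m ≤ cs.get ⟨j, hj⟩ :=
    fun j hj => le_trans Ideal.mul_le_right (Ideal.le_of_dvd (List.dvd_prod (List.get_mem cs _)))
  refine ⟨m, hm0, g₁, ?_⟩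
  intro t ht h hF
  rcases he : etaStar K B h with _ | _
  · -- etaStar h = false
    have hφh : φ h = bst h := by rw [hφdef]; simp [he]
    have hgbst : g₁ + t ∈ bst h := by
      have := hsle h hF (add_mem hg₁base (hmbase ht))
      rwa [hφh] at this
    by_cases hbB : bst h ∈ B
    · have hmem2 : h + (g₁ + t) ∈ bst h := add_mem (hbst h (hmemfalse h he)).2 hgbst
      rw [eta_eq_false_iff]
      exact ⟨bst h, hbB, hmem2⟩
    · have hFDh : h ∈ FD := by
        rw [hFDdef, Finset.mem_filter]
        exact ⟨hF, he, hbB⟩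
      have hhL : h ∈ L := Finset.mem_toList.mpr hFDh
      obtain ⟨i, hieq⟩ := List.mem_iff_get.mp hhL
      have hi' : (i : ℕ) < n := by omega
      set c : Ideal R := cs.get ⟨(i : ℕ), by omega⟩ with hcdef2
      have hcmem : c ∈ Cs h := by
        have := hget i hi'
        rwa [show (⟨(i : ℕ), hi'⟩ : Fin L.length) = i from Fin.ext rfl, hieq] at this
      have hD := (hLD h hhL).1
      have hdc : bst h * c ∈ B := (hCs h hD).2.2.2 c hcmem
      have hin_c : h + (g₁ + t) ∈ c := by
        have h1 : g₁ + h ∈ c := by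
          have := hg₁c i hi'
          rwa [show (⟨(i : ℕ), hi'⟩ : Fin L.length) = i from Fin.ext rfl, hieq] at this
        have h2 : t ∈ c := hmcs i (by omega) ht
        have h3 : h + (g₁ + t) = (g₁ + h) + t := by ring
        rw [h3]
        exact add_mem h1 h2
      have hin_d : h + (g₁ + t) ∈ bst h := add_mem (hbst h (hmemfalse h he)).2 hgbst
      have hsup : bst h ⊔ c = ⊤ := by
        have h1 : c ⊔ sbase = ⊤ := hcs_cop c (List.get_mem cs _)
        have h2 : sbase ≤ bst h := by
          have := hsle h hF
          rwa [hφh] at this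
        rw [sup_comm]
        exact sup_top_of_le h1 h2
      have hmul : bst h * c = bst h ⊓ c := Ideal.mul_eq_inf_of_coprime hsup
      rw [eta_eq_false_iff]
      refine ⟨bst h * c, hdc, ?_⟩
      rw [hmul]
      exact ⟨hin_d, hin_c⟩
  · -- etaStar h = true
    have hh' : h ∉ MB K (B ∪ Dset K B) := hmemtrue h he
    have hφh : φ h = sfun h := by rw [hφdef]; simp [he]
    have hgφ : g₁ + t ∈ sfun h := by
      have := hsle h hF (add_mem hg₁base (hmbase ht))
      rwa [hφh] at this
    have hfree := (hsfun h hh').2 _ hgφ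
    rw [eta_eq_true_iff]
    intro hmem
    exact hfree (MB_mono Set.subset_union_left hmem)


lemma closure_transfer {x y z : 𝓞 K → Bool} (hx : x ∈ closure (orbit K y))
    (hpat : ∀ F : Finset (𝓞 K), ∃ mm : Ideal R, mm ≠ ⊥ ∧ ∃ g₁ : 𝓞 K, ∀ t ∈ mm, ∀ h ∈ F,
      y (h + (g₁ + t)) = z h) :
    z ∈ closure (orbit K x) := by
  rw [mem_closure_orbit_iff]
  intro F
  obtain ⟨mm, hmm, g₁, hpat'⟩ := hpat F
  obtain ⟨G, hG⟩ := exists_reps hmm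
  classical
  set W : Finset (𝓞 K) := F.biUnion (fun h => G.image (fun r => h + r)) with hWdef
  obtain ⟨g₀, hg₀⟩ := mem_closure_orbit_iff.mp hx W
  obtain ⟨r, hrG, hr⟩ := hG (g₀ - g₁)
  refine ⟨r, ?_⟩
  intro h hF
  have hW : h + r ∈ W := Finset.mem_biUnion.mpr ⟨h, hF, Finset.mem_image_of_mem _ hrG⟩
  have h1 : y (h + r + g₀) = x (h + r) := hg₀ _ hW
  have h2 : y (h + (g₁ + (g₀ - g₁ + r))) = z h := hpat' _ hr h hF
  have h3 : h + (g₁ + (g₀ - g₁ + r)) = h + r + g₀ := by ring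
  rw [h3, h1] at h2
  exact h2

lemma toeplitz_window {B : Set (Ideal R)} (hB : ∀ b ∈ B, b ≠ ⊥ ∧ b ≠ ⊤)
    (F : Finset (𝓞 K)) :
    ∃ mm : Ideal R, mm ≠ ⊥ ∧ ∃ g₁ : 𝓞 K, ∀ t ∈ mm, ∀ h ∈ F,
      etaStar K B (h + (g₁ + t)) = etaStar K B h := by
  classical
  choose sfun hs1 hs2 using fun h => etaStar_toeplitz hB h
  refine ⟨∏ h ∈ F, sfun h, ?_, 0, ?_⟩
  · rw [← Ideal.zero_eq_bot]
    exact Finset.prod_ne_zero_iff.mpr fun h hF => by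
      rw [Ideal.zero_eq_bot]; exact hs1 h
  · intro t ht h hF
    have hle : (∏ h ∈ F, sfun h) ≤ sfun h := Ideal.le_of_dvd (Finset.dvd_prod_of_mem sfun hF)
    rw [zero_add]
    exact hs2 h t (hle ht)

/-- Key: for every point of `X_η`, `η*` lies in the closure of its orbit. -/
lemma etaStar_mem_closure {B : Set (Ideal R)} (hB : ∀ b ∈ B, b ≠ ⊥ ∧ b ≠ ⊤)
    {x : 𝓞 K → Bool} (hx : x ∈ closure (orbit K (eta K B))) :
    etaStar K B ∈ closure (orbit K x) :=
  closure_transfer hx (fun F => key_window hB F)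

lemma etaStar_mem_closure_star {B : Set (Ideal R)} (hB : ∀ b ∈ B, b ≠ ⊥ ∧ b ≠ ⊤)
    {x : 𝓞 K → Bool} (hx : x ∈ closure (orbit K (etaStar K B))) :
    etaStar K B ∈ closure (orbit K x) :=
  closure_transfer hx (fun F => toeplitz_window hB F)


end BFree

namespace BFree

/-- **Theorem A.** `η*` is an `𝓞 K`-Toeplitz array, `η* ≤ η`, and `X_{η*}` is the unique
minimal subset of `X_η`. -/
theorem etaStar_toeplitz_and_unique_minimal
    (K : Type*) [Field K] [NumberField K]
    (B : Set (Ideal (𝓞 K)))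
    (hB : ∀ b ∈ B, b ≠ ⊥ ∧ b ≠ ⊤)
    (hprim : Primitive K B) :
    IsToeplitz K (etaStar K B) ∧
    (∀ g : 𝓞 K, etaStar K B g ≤ eta K B g) ∧
    orbitClosure K (etaStar K B) ⊆ orbitClosure K (eta K B) ∧
    IsMinimalSubset K (orbitClosure K (etaStar K B)) ∧
    (∀ M : Set (𝓞 K → Bool), M ⊆ orbitClosure K (eta K B) → IsMinimalSubset K M →
      M = orbitClosure K (etaStar K B)) := by
  have hstar_self : etaStar K B ∈ closure (orbit K (etaStar K B)) :=
    subset_closure (mem_orbit_self _)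
  have heta_self : eta K B ∈ closure (orbit K (eta K B)) :=
    subset_closure (mem_orbit_self _)
  refine ⟨?_, etaStar_le_eta' B, ?_, ?_, ?_⟩
  · intro g
    obtain ⟨s, h1, h2⟩ := etaStar_toeplitz hB g
    exact ⟨s, h1, h2⟩
  · exact closure_orbit_subset (etaStar_mem_closure hB heta_self)
  · refine ⟨⟨etaStar K B, hstar_self⟩, isClosed_closure, ?_, ?_⟩
    · intro g x hx
      exact shift_mem_closure_orbit hx g
    · intro x hx
      exact closure_orbit_subset (etaStar_mem_closure_star hB hx)
  · intro M hM hMmin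
    obtain ⟨hMne, hMcl, hMinv, hMdense⟩ := hMmin
    obtain ⟨x₀, hx₀⟩ := hMne
    have hx₀X : x₀ ∈ closure (orbit K (eta K B)) := hM hx₀
    have hstar_x₀ : etaStar K B ∈ closure (orbit K x₀) := etaStar_mem_closure hB hx₀X
    have horb : orbit K x₀ ⊆ M := by
      rintro w ⟨g, rfl⟩
      exact hMinv g x₀ hx₀
    have hclorb : closure (orbit K x₀) ⊆ M := by
      have := closure_minimal horb hMcl
      exact this
    have hsub1 : orbitClosure K (etaStar K B) ⊆ M :=
      le_trans (closure_orbit_subset hstar_x₀) hclorb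
    have hsub2 : M ⊆ orbitClosure K (etaStar K B) :=
      hMdense (etaStar K B) (hsub1 hstar_self)
    exact Set.Subset.antisymm hsub2 hsub1


end BFree
end

section
/- Let B be a primitive collection of nonzero proper ideals of O_K and let (S_i)_{i≥1} be a saturated filtration of B by finite nonempty subcollections. Then O_K \ ⋃_s Per(η, s), where the union is taken over all nonzero ideals s of O_K, equals M_D ∩ F_B, which in turn equals O_K \ ⋃_{i≥1} Per(η, lcm(S_i)); here M_D = ⋃_{d∈D} d. -/
open Set Filter Topology NumberField

namespace BFree

/-- In a Dedekind domain, a nonzero ideal has finitely many ideals above it. -/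
theorem BFree.finite_setOf_le' {R : Type*} [CommRing R] [IsDedekindDomain R]
    {s : Ideal R} (hs : s ≠ ⊥) : {I : Ideal R | s ≤ I}.Finite := by
  have h : {I : Ideal R | s ≤ I} = {I : Ideal R | I ∣ s} := by
    ext I; exact Ideal.dvd_iff_le.symm
  rw [h]
  haveI : Fintype {I : Ideal R // I ∣ s} := UniqueFactorizationMonoid.fintypeSubtypeDvd s hs
  have : Finite ↑{I : Ideal R | I ∣ s} := Finite.of_fintype {I : Ideal R // I ∣ s}
  exact Set.toFinite _

/-- Given an infinite pairwise coprime family and a nonzero ideal `s`, some member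
is coprime to `s`. -/
theorem BFree.exists_coprime' {R : Type*} [CommRing R] [IsDedekindDomain R]
    {C : Set (Ideal R)} (hC : C.Infinite)
    (hcop : ∀ c ∈ C, ∀ c' ∈ C, c ≠ c' → c ⊔ c' = ⊤)
    {s : Ideal R} (hs : s ≠ ⊥) : ∃ c ∈ C, c ⊔ s = ⊤ := by
  by_contra h
  push_neg at h
  have hex : ∀ c ∈ C, ∃ p : Ideal R, p.IsMaximal ∧ c ⊔ s ≤ p := fun c hc =>
    Ideal.exists_le_maximal _ (h c hc)
  choose! p hpmax hple using hex
  have hinj : Set.InjOn p C := by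
    intro c hc c' hc' hpe
    by_contra hne
    have h1 : c ⊔ c' ≤ p c :=
      sup_le (le_trans le_sup_left (hple c hc))
        (hpe ▸ le_trans le_sup_left (hple c' hc'))
    rw [hcop c hc c' hc' hne] at h1
    exact (hpmax c hc).ne_top (top_le_iff.mp h1)
  have hmaps : p '' C ⊆ {I : Ideal R | s ≤ I} := by
    rintro _ ⟨c, hc, rfl⟩
    exact le_trans le_sup_right (hple c hc)
  exact hC (Set.Finite.of_finite_image ((BFree.finite_setOf_le' hs).subset hmaps) hinj)

/-- A finite `sInf` of nonzero ideals in a domain is nonzero. -/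
theorem BFree.sInf_ne_bot' {R : Type*} [CommRing R] [IsDomain R]
    {S : Set (Ideal R)} (hfin : S.Finite) (h : ∀ b ∈ S, b ≠ ⊥) : sInf S ≠ ⊥ := by
  classical
  have hex : ∀ b ∈ S, ∃ x : R, x ∈ b ∧ x ≠ 0 := fun b hb =>
    Submodule.exists_mem_ne_zero_of_ne_bot (h b hb)
  choose! f hf hf0 using hex
  set x : R := ∏ b ∈ hfin.toFinset, f b with hx
  have hx0 : x ≠ 0 := by
    rw [hx]
    exact Finset.prod_ne_zero_iff.mpr fun b hb => hf0 b (hfin.mem_toFinset.mp hb)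
  have hxmem : x ∈ sInf S := by
    rw [Submodule.mem_sInf]
    intro b hb
    rw [hx, ← Finset.mul_prod_erase _ _ (hfin.mem_toFinset.mpr hb)]
    exact Ideal.mul_mem_right _ _ (hf b hb)
  intro hbot
  rw [hbot, Submodule.mem_bot] at hxmem
  exact hx0 hxmem

set_option maxHeartbeats 2000000 in
/-- **Proposition.** Description of the non-periodic positions of `η`: they are exactly
`M_D ∩ F_B`, and also exactly the positions that are non-periodic along the filtration. -/
theorem nonperiodic_positions
    (K : Type*) [Field K] [NumberField K]
    (B : Set (Ideal (𝓞 K)))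
    (hB : ∀ b ∈ B, b ≠ ⊥ ∧ b ≠ ⊤)
    (hprim : Primitive K B)
    (S : ℕ → Set (Ideal (𝓞 K)))
    (hfin : ∀ i, (S i).Finite) (hne : ∀ i, (S i).Nonempty) (hsub : ∀ i, S i ⊆ B)
    (hmono : Monotone S) (hunion : (⋃ i, S i) = B)
    (hsat : ∀ i, ((fun b => b ⊔ sInf (S i)) '' B) ∩ B = S i) :
    (⋃ s ∈ {s : Ideal (𝓞 K) | s ≠ ⊥}, Per K (eta K B) s)ᶜ
      = MB K (Dset K B) ∩ (MB K B)ᶜ ∧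
    MB K (Dset K B) ∩ (MB K B)ᶜ
      = (⋃ i, Per K (eta K B) (sInf (S i)))ᶜ := by
  classical
  -- Basic facts about `eta`.
  have hfalse : ∀ g : 𝓞 K, g ∈ MB K B → eta K B g = false := by
    intro g hg; simp [eta, hg]
  have htrue : ∀ g : 𝓞 K, g ∉ MB K B → eta K B g = true := by
    intro g hg; simp [eta, hg]
  have hLne : ∀ i, sInf (S i) ≠ ⊥ :=
    fun i => BFree.sInf_ne_bot' (hfin i) (fun b hb => (hB b (hsub i hb)).1)
  -- Step (a): every multiple of `B` is periodic along the filtration.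
  have hMBsub : MB K B ⊆ ⋃ i, Per K (eta K B) (sInf (S i)) := by
    rintro g ⟨b, hbB, hgb⟩
    have hbU : b ∈ ⋃ i, S i := hunion ▸ hbB
    obtain ⟨i, hi⟩ := Set.mem_iUnion.mp hbU
    refine Set.mem_iUnion.mpr ⟨i, fun t ht => ?_⟩
    have htb : t ∈ b := sInf_le hi ht
    rw [hfalse _ ⟨b, hbB, b.add_mem hgb htb⟩, hfalse _ ⟨b, hbB, hgb⟩]
  -- Step (c): a `B`-free multiple of `D` is non-periodic for every nonzero `s`.
  have hMDsub : MB K (Dset K B) ∩ (MB K B)ᶜ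
      ⊆ (⋃ s ∈ {s : Ideal (𝓞 K) | s ≠ ⊥}, Per K (eta K B) s)ᶜ := by
    rintro g ⟨⟨d, hdD, hgd⟩, hgF⟩ hgA
    simp only [Set.mem_iUnion, Set.mem_setOf_eq] at hgA
    obtain ⟨s, hs, hper⟩ := hgA
    obtain ⟨hd0, C, hCinf, hCne, hCcop, hCB⟩ := hdD
    obtain ⟨c, hcC, hcs⟩ := BFree.exists_coprime' hCinf hCcop hs
    have hgd' : g ∈ d * c ⊔ s := by
      have h1 : d = d * c ⊔ d * s := by rw [← Ideal.mul_sup, hcs, Ideal.mul_top]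
      have h2 : (d : Ideal (𝓞 K)) ≤ d * c ⊔ s := by
        calc (d : Ideal (𝓞 K)) = d * c ⊔ d * s := h1
        _ ≤ d * c ⊔ s := sup_le_sup_left Ideal.mul_le_right _
      exact h2 hgd
    obtain ⟨u, hu, v, hv, huv⟩ := Submodule.mem_sup.mp hgd'
    have hmem : g + (-v) ∈ MB K B := by
      refine ⟨d * c, hCB c hcC, ?_⟩
      have : g + -v = u := by rw [← huv]; ring
      rwa [this]
    have := hper (-v) (neg_mem hv)
    rw [hfalse _ hmem, htrue _ hgF] at this
    exact Bool.false_ne_true this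
  -- Step (b): a `B`-free element not in `M_D` is periodic along the filtration.
  have hHard : (MB K (Dset K B))ᶜ ∩ (MB K B)ᶜ ⊆ ⋃ i, Per K (eta K B) (sInf (S i)) := by
    rintro g ⟨hgD, hgF⟩
    rw [Set.mem_compl_iff] at hgD hgF
    by_contra hgP
    -- witnesses of non-periodicity
    have hw : ∀ i, ∃ t, t ∈ sInf (S i) ∧ g + t ∈ MB K B := by
      intro i
      have hnp : g ∉ Per K (eta K B) (sInf (S i)) := fun h =>
        hgP (Set.mem_iUnion.mpr ⟨i, h⟩)
      simp only [Per, Set.mem_setOf_eq, not_forall] at hnp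
      obtain ⟨t, ht, hneq⟩ := hnp
      refine ⟨t, ht, ?_⟩
      by_contra hmem
      exact hneq (by rw [htrue _ hmem, htrue _ hgF])
    choose t ht hb using hw
    choose b hbB hgtb using hb
    -- `g` is nonzero
    have hg0 : g ≠ 0 := by
      intro h
      obtain ⟨b0, hb0⟩ := hne 0
      exact hgF ⟨b0, hsub 0 hb0, h ▸ b0.zero_mem⟩
    -- the ideals `Dd i` all contain `g` and avoid `B`
    set Dd : ℕ → Ideal (𝓞 K) := fun i => b i ⊔ sInf (S i) with hDd
    have hgDd : ∀ i, g ∈ Dd i := by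
      intro i
      have h1 : g + t i ∈ Dd i := Submodule.mem_sup_left (hgtb i)
      have h2 : t i ∈ Dd i := Submodule.mem_sup_right (ht i)
      have := (Dd i).add_mem h1 ((Dd i).neg_mem h2)
      simpa using this
    have hDdB : ∀ i, Dd i ∉ B := fun i h => hgF ⟨Dd i, h, hgDd i⟩
    -- pigeonhole: finitely many ideals contain `g`
    have hfinset : {I : Ideal (𝓞 K) | g ∈ I}.Finite := by
      have hsb : (Ideal.span {g} : Ideal (𝓞 K)) ≠ ⊥ := by
        simpa [Ideal.span_singleton_eq_bot] using hg0
      have heq : {I : Ideal (𝓞 K) | g ∈ I} = {I : Ideal (𝓞 K) | Ideal.span {g} ≤ I} := by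
        ext I; simp [Ideal.span_singleton_le_iff_mem]
      rw [heq]
      exact BFree.finite_setOf_le' hsb
    have hpig : ∃ d : Ideal (𝓞 K), {i : ℕ | Dd i = d}.Infinite := by
      by_contra h
      push_neg at h
      have hcover : (Set.univ : Set ℕ) ⊆ ⋃ d ∈ {I : Ideal (𝓞 K) | g ∈ I}, {i | Dd i = d} :=
        fun i _ => Set.mem_biUnion (hgDd i) rfl
      exact Set.infinite_univ ((hfinset.biUnion fun d _ => h d).subset hcover)
    obtain ⟨d, hdI⟩ := hpig
    have hgd : g ∈ d := by
      obtain ⟨i, hi⟩ := hdI.nonempty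
      exact hi ▸ hgDd i
    have hd0 : d ≠ ⊥ := fun h => hg0 (by simpa [h] using hgd)
    have hdB : d ∉ B := by
      obtain ⟨i, hi⟩ := hdI.nonempty
      exact hi ▸ hDdB i
    -- build an increasing sequence in the fiber
    have hstep : ∀ n k : ℕ, ∃ m, m ∈ {i : ℕ | Dd i = d} ∧ n < m ∧ b k ∈ S m := by
      intro n k
      have hbU : b k ∈ ⋃ j, S j := hunion ▸ hbB k
      obtain ⟨j, hj⟩ := Set.mem_iUnion.mp hbU
      obtain ⟨m, hmI, hm⟩ := hdI.exists_gt (max n j)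
      exact ⟨m, hmI, lt_of_le_of_lt (le_max_left _ _) hm,
        hmono (le_of_lt (lt_of_le_of_lt (le_max_right _ _) hm)) hj⟩
    choose nxt hnxtI hnxtlt hnxtS using hstep
    obtain ⟨m0, hm0I⟩ := hdI.nonempty
    set φ : ℕ → ℕ := fun m => Nat.rec m0 (fun _ prev => nxt prev prev) m with hφ
    have hφsucc : ∀ m, φ (m + 1) = nxt (φ m) (φ m) := fun m => rfl
    have hφI : ∀ m, φ m ∈ {i : ℕ | Dd i = d} := by
      intro m
      induction m with
      | zero => exact hm0I
      | succ n _ => rw [hφsucc]; exact hnxtI _ _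
    have hφmono : StrictMono φ :=
      strictMono_nat_of_lt_succ fun n => by rw [hφsucc]; exact hnxtlt _ _
    have hφS : ∀ m, b (φ m) ∈ S (φ (m + 1)) := fun m => by
      rw [hφsucc]; exact hnxtS _ _
    have hLb : ∀ m n : ℕ, m < n → sInf (S (φ n)) ≤ b (φ m) := by
      intro m n hmn
      have h1 : b (φ m) ∈ S (φ n) :=
        hmono (hφmono.monotone (Nat.succ_le_of_lt hmn)) (hφS m)
      exact sInf_le h1
    -- divide out `d`
    have hdvd : ∀ m : ℕ, d ∣ b (φ m) := by
      intro m
      have hDm : Dd (φ m) = d := hφI m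
      have h1 : b (φ m) ≤ Dd (φ m) := le_sup_left
      rw [hDm] at h1
      exact Ideal.dvd_iff_le.mpr h1
    choose c hc using hdvd
    have hcB : ∀ m, d * c m ∈ B := fun m => by rw [← hc m]; exact hbB (φ m)
    have hctop : ∀ m, c m ≠ ⊤ := by
      intro m h
      apply hdB
      have h2 := hc m
      rw [h, Ideal.mul_top] at h2
      rw [← h2]
      exact hbB (φ m)
    have hcbot : ∀ m, c m ≠ ⊥ := by
      intro m h
      apply (hB (b (φ m)) (hbB (φ m))).1
      rw [hc m, h, Ideal.mul_bot]
    -- pairwise coprimality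
    have hcop : ∀ m n : ℕ, m < n → c n ⊔ c m = ⊤ := by
      intro m n hmn
      by_contra hne'
      obtain ⟨p, hpmax, hple⟩ := Ideal.exists_le_maximal _ hne'
      have h1 : (d : Ideal (𝓞 K)) ≤ d * p := by
        have hDn : b (φ n) ⊔ sInf (S (φ n)) = d := hφI n
        have he : d = d * c n ⊔ sInf (S (φ n)) := by
          conv_lhs => rw [← hDn, hc n]
        conv_lhs => rw [he]
        refine sup_le ?_ ?_
        · exact Ideal.mul_mono_right (le_trans le_sup_left hple)
        · refine le_trans (hLb m n hmn) ?_
          rw [hc m]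
          exact Ideal.mul_mono_right (le_trans le_sup_right hple)
      have h2 : d * p = d * ⊤ := by
        rw [Ideal.mul_top]
        exact le_antisymm (le_trans Ideal.mul_le_left le_rfl) h1
      exact hpmax.ne_top (mul_left_cancel₀ hd0 h2)
    have hcinj : Function.Injective c := by
      intro m n hmn'
      by_contra hne'
      rcases lt_or_gt_of_ne hne' with h | h
      · have := hcop m n h; rw [hmn', sup_idem] at this; exact hctop n this
      · have := hcop n m h; rw [hmn', sup_idem] at this; exact hctop n this
    -- `d ∈ D`
    apply hgD
    refine ⟨d, ⟨hd0, Set.range c, Set.infinite_range_of_injective hcinj, ?_, ?_, ?_⟩, hgd⟩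
    · rintro _ ⟨m, rfl⟩
      refine ⟨hcbot m, hctop m⟩
    · rintro _ ⟨m, rfl⟩ _ ⟨n, rfl⟩ hne'
      have hmn : m ≠ n := fun h => hne' (h ▸ rfl)
      rcases lt_or_gt_of_ne hmn with h | h
      · rw [sup_comm]; exact hcop m n h
      · exact hcop n m h
    · rintro _ ⟨m, rfl⟩
      exact hcB m
  -- Step (d): periodicity along the filtration implies periodicity.
  have hPA : (⋃ i, Per K (eta K B) (sInf (S i)))
      ⊆ ⋃ s ∈ {s : Ideal (𝓞 K) | s ≠ ⊥}, Per K (eta K B) s := by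
    refine Set.iUnion_subset fun i => ?_
    exact Set.subset_biUnion_of_mem (hLne i)
  -- Assemble the inclusions.
  have hQsub : (⋃ i, Per K (eta K B) (sInf (S i)))ᶜ ⊆ MB K (Dset K B) ∩ (MB K B)ᶜ := by
    intro g hg
    have hgF : g ∉ MB K B := fun h => hg (hMBsub h)
    have hgD : g ∈ MB K (Dset K B) := by
      by_contra h
      exact hg (hHard ⟨h, hgF⟩)
    exact ⟨hgD, hgF⟩
  have hAP : (⋃ s ∈ {s : Ideal (𝓞 K) | s ≠ ⊥}, Per K (eta K B) s)ᶜ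
      ⊆ (⋃ i, Per K (eta K B) (sInf (S i)))ᶜ :=
    Set.compl_subset_compl.mpr hPA
  constructor
  · exact Set.Subset.antisymm (Set.Subset.trans hAP hQsub) hMDsub
  · exact Set.Subset.antisymm (Set.Subset.trans hMDsub hAP) hQsub


end BFree
end

section
/- Let B be a primitive collection of nonzero proper ideals of O_K with D = ∅. Let r ∈ O_K and let a be a nonzero ideal of O_K. If r + a ⊆ M_B, then there exists b ∈ B such that (r) + a ⊆ b, where (r) denotes the principal ideal generated by r. -/
open Set Filter Topology NumberField

open UniqueFactorizationMonoid

set_option maxHeartbeats 1000000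

namespace BFreeAux

variable {R : Type*} [CommRing R] [IsDomain R] [IsDedekindDomain R]

open scoped Classical in
lemma pow_dvd_iff_count {p I : Ideal R} (hp : Prime p) (hI : I ≠ ⊥) {k : ℕ} :
    p ^ k ∣ I ↔ k ≤ (normalizedFactors I).count p := by
  classical
  rw [dvd_iff_normalizedFactors_le_normalizedFactors (pow_ne_zero k hp.ne_zero) hI,
    hp.irreducible.normalizedFactors_pow, normalize_eq,
    ← Multiset.le_count_iff_replicate_le]

lemma crt (a : Ideal R) (m : Ideal R → ℕ) (tt : Ideal R → R)
    (P : Finset (Ideal R)) (hPmax : ∀ p ∈ P, (p : Ideal R).IsMaximal)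
    (htt : ∀ p ∈ P, tt p ∈ a) :
    ∃ t ∈ a, ∀ p ∈ P, t - tt p ∈ p ^ (m p) := by
  classical
  induction P using Finset.induction with
  | empty => exact ⟨0, a.zero_mem, by simp⟩
  | @insert p₀ P hp₀P IH =>
    obtain ⟨t, hta, hcong⟩ := IH (fun p hp => hPmax p (Finset.mem_insert_of_mem hp))
      (fun p hp => htt p (Finset.mem_insert_of_mem hp))
    have h1 : ∀ p ∈ P, IsCoprime p₀ p := by
      intro p hp
      have hne : p₀ ≠ p := fun h => hp₀P (h ▸ hp)
      exact Ideal.isCoprime_iff_sup_eq.mpr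
        ((hPmax p₀ (Finset.mem_insert_self _ _)).coprime_of_ne
          (hPmax p (Finset.mem_insert_of_mem hp)) hne)
    have h2 : IsCoprime p₀ (∏ p ∈ P, p ^ (m p)) :=
      IsCoprime.prod_right fun p hp => (h1 p hp).pow_right
    have hcop : IsCoprime (p₀ ^ (m p₀)) (∏ p ∈ P, p ^ (m p)) := h2.pow_left
    obtain ⟨x, hx, y, hy, hxy⟩ := Ideal.isCoprime_iff_exists.mp hcop
    refine ⟨t * x + tt p₀ * y, ?_, ?_⟩
    · exact Ideal.add_mem a (Ideal.mul_mem_right _ _ hta)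
        (Ideal.mul_mem_right _ _ (htt p₀ (Finset.mem_insert_self _ _)))
    · intro p hp
      rcases Finset.mem_insert.mp hp with rfl | hpP
      · have heq : t * x + tt p * y - tt p = (t - tt p) * x := by
          linear_combination tt p * hxy
        rw [heq]
        exact Ideal.mul_mem_left _ _ hx
      · have heq : t * x + tt p₀ * y - tt p = (t - tt p) + (tt p₀ - t) * y := by
          linear_combination t * hxy
        rw [heq]
        refine Ideal.add_mem _ (hcong p hpP) ?_
        have hyle : (∏ q ∈ P, q ^ (m q)) ≤ p ^ (m p) :=
          Ideal.dvd_iff_le.mp (Finset.dvd_prod_of_mem _ hpP)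
        exact Ideal.mul_mem_left _ _ (hyle hy)

end BFreeAux

namespace Step

open scoped Classical in
lemma step {R : Type*} [CommRing R] [IsDomain R] [IsDedekindDomain R]
    (B : Set (Ideal R)) (hB : ∀ b ∈ B, b ≠ ⊥ ∧ b ≠ ⊤)
    (r : R) (a : Ideal R) (ha : a ≠ ⊥)
    (h : ∀ t ∈ a, ∃ b ∈ B, r + t ∈ b)
    (hcon : ¬ ∃ b ∈ B, Ideal.span {r} ⊔ a ≤ b)
    (S : Finset (Ideal R)) (hS : ∀ c ∈ S, c ≠ ⊥ ∧ c ≠ ⊤) :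
    ∃ d c : Ideal R, a ≤ d ∧ c ≠ ⊥ ∧ c ≠ ⊤ ∧ d * c ∈ B ∧ ∀ c' ∈ S, c ⊔ c' = ⊤ := by
  classical
  set P : Finset (Ideal R) := S.biUnion (fun c' => (normalizedFactors c').toFinset) with hPdef
  have hPmem : ∀ p ∈ P, Prime p ∧ p ≠ ⊥ := by
    intro p hp
    obtain ⟨c', hc'S, hpc'⟩ := Finset.mem_biUnion.mp hp
    have hprime : Prime p :=
      (prime_of_normalized_factor p (Multiset.mem_toFinset.mp hpc'))
    exact ⟨hprime, hprime.ne_zero⟩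
  have hPmax : ∀ p ∈ P, (p : Ideal R).IsMaximal := fun p hp =>
    (Ideal.isPrime_of_prime (hPmem p hp).1).isMaximal (hPmem p hp).2
  set m : Ideal R → ℕ := fun p => (normalizedFactors a).count p + 1 with hmdef
  -- choose local targets
  have key : ∀ p ∈ P, ∃ tp, tp ∈ a ∧ r + tp ∉ p ^ (m p) := by
    intro p hp
    have hprime := (hPmem p hp).1
    have hnotle : ¬ a ≤ p ^ (m p) := by
      intro hle
      have hdvd : p ^ (m p) ∣ a := Ideal.dvd_iff_le.mpr hle
      have := (BFreeAux.pow_dvd_iff_count hprime ha).mp hdvd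
      simp [hmdef] at this
    by_cases hr : r ∈ p ^ (m p)
    · obtain ⟨tp, htp, htp'⟩ := SetLike.not_le_iff_exists.mp hnotle
      refine ⟨tp, htp, fun hmem => htp' ?_⟩
      have : (r + tp) - r ∈ p ^ (m p) := Submodule.sub_mem _ hmem hr
      simpa using this
    · exact ⟨0, a.zero_mem, by simpa using hr⟩
  choose! tt htt1 htt2 using key
  obtain ⟨t, hta, hcong⟩ := BFreeAux.crt a m tt P hPmax htt1
  have hnot : ∀ p ∈ P, r + t ∉ p ^ (m p) := by
    intro p hp hmem
    refine htt2 p hp ?_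
    have : (r + t) - (t - tt p) ∈ p ^ (m p) := Submodule.sub_mem _ hmem (hcong p hp)
    have heq : (r + t) - (t - tt p) = r + tt p := by ring
    rwa [heq] at this
  obtain ⟨b, hbB, hrtb⟩ := h t hta
  have hb0 : b ≠ ⊥ := (hB b hbB).1
  set d : Ideal R := b ⊔ a with hddef
  have hdb : d ∣ b := Ideal.dvd_iff_le.mpr le_sup_left
  obtain ⟨c, hc⟩ := hdb
  have hd0 : d ≠ ⊥ := by
    intro hd
    exact ha (le_bot_iff.mp (hd ▸ (le_sup_right : a ≤ d)))
  have hc0 : c ≠ ⊥ := by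
    intro h0
    rw [h0, Ideal.mul_bot] at hc
    exact hb0 hc
  have hcT : c ≠ ⊤ := by
    intro hT
    rw [hT, Ideal.mul_top] at hc
    refine hcon ⟨b, hbB, sup_le ?_ ?_⟩
    · rw [Ideal.span_singleton_le_iff_mem]
      have : (r + t) - t ∈ b := Submodule.sub_mem _ hrtb (hc ▸ (le_sup_right : a ≤ d) hta)
      simpa using this
    · exact hc ▸ (le_sup_right : a ≤ d)
  refine ⟨d, c, le_sup_right, hc0, hcT, by rw [← hc]; exact hbB, ?_⟩
  intro c' hc'S
  by_contra hne
  obtain ⟨p, hpmax, hple⟩ := Ideal.exists_le_maximal _ hne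
  have hc'0 := (hS c' hc'S).1
  have hp0 : p ≠ ⊥ := by
    intro h0
    exact hc'0 (le_bot_iff.mp (h0 ▸ (le_sup_right.trans hple : c' ≤ p)))
  have hprime : Prime p := (Ideal.prime_iff_isPrime hp0).mpr hpmax.isPrime
  have hpP : p ∈ P := by
    refine Finset.mem_biUnion.mpr ⟨c', hc'S, Multiset.mem_toFinset.mpr ?_⟩
    exact (mem_normalizedFactors_iff hc'0).mpr
      ⟨hprime, Ideal.dvd_iff_le.mpr (le_sup_right.trans hple)⟩
  have hpc : p ∣ c := Ideal.dvd_iff_le.mpr (le_sup_left.trans hple)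
  -- counting argument
  set n : ℕ := (normalizedFactors a).count p with hndef
  have hβ : (normalizedFactors b).count p
      = (normalizedFactors d).count p + (normalizedFactors c).count p := by
    rw [hc, normalizedFactors_mul hd0 hc0, Multiset.count_add]
  have hγ : 1 ≤ (normalizedFactors c).count p :=
    Multiset.one_le_count_iff_mem.mpr ((mem_normalizedFactors_iff hc0).mpr ⟨hprime, hpc⟩)
  have hmin : min n ((normalizedFactors b).count p) ≤ (normalizedFactors d).count p := by
    refine (BFreeAux.pow_dvd_iff_count hprime hd0).mp ?_
    refine Ideal.dvd_iff_le.mpr (sup_le ?_ ?_)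
    · exact Ideal.dvd_iff_le.mp ((BFreeAux.pow_dvd_iff_count hprime hb0).mpr (min_le_right _ _))
    · exact Ideal.dvd_iff_le.mp ((BFreeAux.pow_dvd_iff_count hprime ha).mpr (min_le_left _ _))
  have hβge : n + 1 ≤ (normalizedFactors b).count p := by
    omega
  have hble : b ≤ p ^ (m p) := by
    have := (BFreeAux.pow_dvd_iff_count hprime hb0).mpr (by show (normalizedFactors a).count p + 1 ≤ _; exact hβge)
    exact Ideal.dvd_iff_le.mp this
  exact hnot p hpP (hble hrtb)

end Step

namespace BFree

/-- **Theorem.** If `D = ∅` and the coset `r + 𝔞` consists of `B`-multiples, then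
`(r) + 𝔞 ⊆ 𝔟` for some `𝔟 ∈ B`. -/
theorem coset_in_multiples
    (K : Type*) [Field K] [NumberField K]
    (B : Set (Ideal (𝓞 K)))
    (hB : ∀ b ∈ B, b ≠ ⊥ ∧ b ≠ ⊤)
    (hprim : Primitive K B)
    (hD : Dset K B = ∅)
    (r : 𝓞 K) (a : Ideal (𝓞 K)) (ha : a ≠ ⊥)
    (h : ∀ t ∈ a, r + t ∈ MB K B) :
    ∃ b ∈ B, Ideal.span {r} ⊔ a ≤ b := by
  classical
  by_contra hcon
  have hstep := fun S hS => Step.step B hB r a ha (fun t ht => h t ht) hcon S hS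
  have step' : ∀ S : Finset (Ideal (𝓞 K)), ∃ dc : Ideal (𝓞 K) × Ideal (𝓞 K),
      (∀ x ∈ S, x ≠ ⊥ ∧ x ≠ ⊤) →
      (a ≤ dc.1 ∧ dc.2 ≠ ⊥ ∧ dc.2 ≠ ⊤ ∧ dc.1 * dc.2 ∈ B ∧ ∀ c' ∈ S, dc.2 ⊔ c' = ⊤) := by
    intro S
    by_cases hS : ∀ x ∈ S, x ≠ ⊥ ∧ x ≠ ⊤
    · obtain ⟨d, c, h1, h2, h3, h4, h5⟩ := hstep S hS
      exact ⟨(d, c), fun _ => ⟨h1, h2, h3, h4, h5⟩⟩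
    · exact ⟨(⊥, ⊥), fun hv => absurd hv hS⟩
  choose Φ hΦ using step'
  obtain ⟨T, hT0, hTs⟩ : ∃ T : ℕ → Finset (Ideal (𝓞 K)), T 0 = ∅ ∧
      ∀ n, T (n+1) = insert (Φ (T n)).2 (T n) :=
    ⟨fun n => Nat.rec ∅ (fun _ Tn => insert (Φ Tn).2 Tn) n, rfl, fun _ => rfl⟩
  have hvalid : ∀ n, ∀ x ∈ T n, x ≠ ⊥ ∧ x ≠ ⊤ := by
    intro n
    induction n with
    | zero => simp [hT0]
    | succ n IH =>
      intro x hx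
      rw [hTs] at hx
      rcases Finset.mem_insert.mp hx with rfl | hx
      · exact ⟨(hΦ (T n) IH).2.1, (hΦ (T n) IH).2.2.1⟩
      · exact IH x hx
  have hprops := fun n => hΦ (T n) (hvalid n)
  set cc : ℕ → Ideal (𝓞 K) := fun n => (Φ (T n)).2 with hccdef
  set dd : ℕ → Ideal (𝓞 K) := fun n => (Φ (T n)).1 with hdddef
  have hstepsub : ∀ k, T k ⊆ T (k+1) := fun k => by
    rw [hTs]; exact Finset.subset_insert _ _
  have hmem : ∀ n m, n < m → cc n ∈ T m := by
    intro n m hnm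
    induction m with
    | zero => omega
    | succ m IH =>
      rcases Nat.lt_succ_iff_lt_or_eq.mp hnm with h' | h'
      · exact hstepsub m (IH h')
      · subst h'; rw [hTs]; exact Finset.mem_insert_self _ _
  have hcoplt : ∀ n m, n < m → cc m ⊔ cc n = ⊤ := fun n m hnm =>
    (hprops m).2.2.2.2 (cc n) (hmem n m hnm)
  have hcop : ∀ n m, n ≠ m → cc n ⊔ cc m = ⊤ := by
    intro n m hnm
    rcases hnm.lt_or_gt with h' | h'
    · rw [sup_comm]; exact hcoplt n m h'
    · exact hcoplt m n h'
  have hcT : ∀ n, cc n ≠ ⊤ := fun n => (hprops n).2.2.1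
  have hinj : Function.Injective cc := by
    intro n m hnm
    by_contra hne
    have := hcop n m hne
    rw [hnm, sup_idem] at this
    exact hcT m this
  have hdvd : ∀ n, dd n ∣ a := fun n => Ideal.dvd_iff_le.mpr (hprops n).1
  haveI := UniqueFactorizationMonoid.fintypeSubtypeDvd a ha
  have hfinty : Finite {x : Ideal (𝓞 K) // x ∣ a} := Finite.of_fintype _
  have hfin : {x : Ideal (𝓞 K) | x ∣ a}.Finite := Set.finite_coe_iff.mp hfinty
  have hpig : ∃ d₀, {n | dd n = d₀}.Infinite := by
    by_contra hno
    push_neg at hno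
    have hsub : (Set.univ : Set ℕ) ⊆ ⋃ d₀ ∈ {x : Ideal (𝓞 K) | x ∣ a}, {n | dd n = d₀} :=
      fun n _ => Set.mem_biUnion (hdvd n) rfl
    exact Set.infinite_univ (Set.Finite.subset (Set.Finite.biUnion hfin fun d₀ _ => hno d₀) hsub)
  obtain ⟨d₀, hinf⟩ := hpig
  have hd₀ : d₀ ∈ Dset K B := by
    obtain ⟨n₀, hn₀⟩ := hinf.nonempty
    refine ⟨?_, cc '' {n | dd n = d₀}, hinf.image hinj.injOn, ?_, ?_, ?_⟩
    · intro hbot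
      have hle : a ≤ dd n₀ := (hprops n₀).1
      have : dd n₀ = d₀ := hn₀
      rw [this, hbot] at hle
      exact ha (le_bot_iff.mp hle)
    · rintro x ⟨n, _, rfl⟩; exact ⟨(hprops n).2.1, hcT n⟩
    · rintro x ⟨n, _, rfl⟩ y ⟨m, _, rfl⟩ hxy
      exact hcop n m (fun hnm => hxy (by rw [hnm]))
    · rintro x ⟨n, hn, rfl⟩
      have hdn : dd n = d₀ := hn
      rw [← hdn]
      exact (hprops n).2.2.2.1
  rw [hD] at hd₀
  exact hd₀


end BFree
end

section
/- Let B be a primitive collection of nonzero proper ideals of O_K with D = ∅, and let r, g ∈ O_K. If r + (g) ⊆ M_B, where (g) denotes the principal ideal generated by g, then there exists b ∈ B such that (r) + (g) ⊆ b. -/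
open Set Filter Topology NumberField

namespace BFree

section Aux

variable {R : Type*} [CommRing R] [IsDomain R] [IsDedekindDomain R]

lemma coprime_dvd_of_dvd_mul {p W G : Ideal R} (hpm : p.IsMaximal) (hpW : ¬ p ∣ W)
    (hWGp : W ∣ G * p) : W ∣ G := by
  have hsup : W ⊔ p = ⊤ := by
    by_contra hne
    have heq : p = W ⊔ p := hpm.eq_of_le hne le_sup_right
    exact hpW (Ideal.dvd_iff_le.mpr (le_sup_left.trans heq.ge))
  exact (Ideal.isCoprime_iff_sup_eq.mpr hsup).dvd_of_dvd_mul_right hWGp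

lemma dvd_aux {p : Ideal R} (hpm : p.IsMaximal) (hp0 : p ≠ ⊥) :
    ∀ (n : ℕ) (W G X : Ideal R), G ≠ ⊥ → X ≠ ⊥ → W ∣ G * p → W ∣ X →
      p ^ n ∣ G → ¬ p ^ (n + 1) ∣ X → W ∣ G := by
  have hp0' : p ≠ 0 := by simpa [Ideal.zero_eq_bot] using hp0
  intro n
  induction n with
  | zero =>
    intro W G X hG hX hWGp hWX _ hpX
    by_cases hpW : p ∣ W
    · exact absurd (by simpa using hpW.trans hWX) hpX
    · exact coprime_dvd_of_dvd_mul hpm hpW hWGp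
  | succ m ih =>
    intro W G X hG hX hWGp hWX hpn hpX
    by_cases hpW : p ∣ W
    · obtain ⟨W', rfl⟩ := hpW
      obtain ⟨G', rfl⟩ := (dvd_pow_self p (Nat.succ_ne_zero m)).trans hpn
      obtain ⟨X', rfl⟩ := (dvd_mul_right p W').trans hWX
      have h1 : W' ∣ G' * p := by
        have hh : p * W' ∣ p * (G' * p) := by
          rw [show p * (G' * p) = p * G' * p by ring]
          exact hWGp
        exact (mul_dvd_mul_iff_left hp0').mp hh
      have h2 : W' ∣ X' := (mul_dvd_mul_iff_left hp0').mp hWX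
      have h3 : p ^ m ∣ G' := by
        have hh : p * p ^ m ∣ p * G' := by
          rw [← pow_succ']; exact hpn
        exact (mul_dvd_mul_iff_left hp0').mp hh
      have h4 : ¬ p ^ (m + 1) ∣ X' := by
        intro hc
        apply hpX
        rw [pow_succ']
        exact mul_dvd_mul_left p hc
      have hG' : G' ≠ ⊥ := by rintro rfl; rw [Ideal.mul_bot] at hG; exact hG rfl
      have hX' : X' ≠ ⊥ := by rintro rfl; rw [Ideal.mul_bot] at hX; exact hX rfl
      exact mul_dvd_mul_left p (ih W' G' X' hG' hX' h1 h2 h3 h4)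
    · exact coprime_dvd_of_dvd_mul hpm hpW hWGp

lemma exists_max_pow {p G : Ideal R} (hp : Prime p) (hG : G ≠ ⊥) :
    ∃ n, p ^ n ∣ G ∧ ¬ p ^ (n + 1) ∣ G := by
  obtain ⟨n, A, hA, rfl⟩ :=
    WfDvdMonoid.max_power_factor (by simpa [Ideal.zero_eq_bot] using hG) hp.irreducible
  refine ⟨n, dvd_mul_right _ _, fun hc => hA ?_⟩
  have hh : p ^ n * p ∣ p ^ n * A := by rw [← pow_succ]; exact hc
  exact (mul_dvd_mul_iff_left (pow_ne_zero n hp.ne_zero)).mp hh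

end Aux

lemma key_step (K : Type*) [Field K] [NumberField K]
    (B : Set (Ideal (𝓞 K))) (hB : ∀ b ∈ B, b ≠ ⊥ ∧ b ≠ ⊤)
    {r g : 𝓞 K} (hg : g ≠ 0)
    (h : ∀ t ∈ Ideal.span ({g} : Set (𝓞 K)), r + t ∈ MB K B)
    (hcon : ¬ ∃ b ∈ B, Ideal.span {r} ⊔ Ideal.span {g} ≤ b)
    (q : Ideal (𝓞 K)) (hq : q ≠ ⊥) :
    ∃ bdc : Ideal (𝓞 K) × Ideal (𝓞 K) × Ideal (𝓞 K),
      bdc.1 ∈ B ∧ bdc.1 = bdc.2.1 * bdc.2.2 ∧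
      Ideal.span {r} ⊔ Ideal.span {g} ≤ bdc.2.1 ∧
      bdc.2.2 ≠ ⊤ ∧ bdc.2.2 ≠ ⊥ ∧ bdc.2.2 ⊔ q = ⊤ := by
  classical
  have hg' : Ideal.span ({g} : Set (𝓞 K)) ≠ ⊥ := by
    simpa [Ideal.span_singleton_eq_bot] using hg
  have hfin : {p : Ideal (𝓞 K) | p.IsMaximal ∧ q ≤ p}.Finite := by
    haveI := UniqueFactorizationMonoid.fintypeSubtypeDvd q
      (by simpa [Ideal.zero_eq_bot] using hq)
    apply Set.Finite.subset
      (Set.finite_range (fun x : {x : Ideal (𝓞 K) // x ∣ q} => (x : Ideal (𝓞 K))))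
    rintro p ⟨_, hple⟩
    exact ⟨⟨p, Ideal.dvd_iff_le.mpr hple⟩, rfl⟩
  set P := hfin.toFinset with hP
  have hPmem : ∀ p : Ideal (𝓞 K), p ∈ P ↔ p.IsMaximal ∧ q ≤ p := fun p => hfin.mem_toFinset
  have hpbot : ∀ i : ↥P, (i : Ideal (𝓞 K)) ≠ ⊥ := by
    rintro ⟨p, hp⟩ rfl
    exact hq (le_bot_iff.mp ((hPmem _).mp hp).2)
  have hprime : ∀ i : ↥P, Prime (i : Ideal (𝓞 K)) :=
    fun i => Ideal.prime_of_isPrime (hpbot i) ((hPmem _).mp i.2).1.isPrime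
  have hex : ∀ i : ↥P, ∃ n, (i : Ideal (𝓞 K)) ^ n ∣ Ideal.span {g} ∧
      ¬ (i : Ideal (𝓞 K)) ^ (n + 1) ∣ Ideal.span {g} :=
    fun i => exists_max_pow (hprime i) hg'
  choose n hn1 hn2 using hex
  have hloc : ∀ i : ↥P, ∃ s : 𝓞 K, r + g * s ∉ (i : Ideal (𝓞 K)) ^ (n i + 1) := by
    intro i
    by_contra hall
    push_neg at hall
    have h0 : r ∈ (i : Ideal (𝓞 K)) ^ (n i + 1) := by simpa using hall 0
    have h1 := hall 1
    have hgmem : g ∈ (i : Ideal (𝓞 K)) ^ (n i + 1) := by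
      have := Ideal.sub_mem _ h1 h0
      simpa using this
    exact hn2 i (Ideal.dvd_iff_le.mpr ((Ideal.span_singleton_le_iff_mem _).mpr hgmem))
  choose s₀ hs₀ using hloc
  have hpair : Pairwise fun i j : ↥P =>
      IsCoprime ((i : Ideal (𝓞 K)) ^ (n i + 1)) ((j : Ideal (𝓞 K)) ^ (n j + 1)) := by
    intro i j hij
    have hne : (i : Ideal (𝓞 K)) ≠ (j : Ideal (𝓞 K)) := fun hc => hij (Subtype.ext hc)
    have hcop : IsCoprime (i : Ideal (𝓞 K)) (j : Ideal (𝓞 K)) :=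
      Ideal.isCoprime_iff_sup_eq.mpr
        (((hPmem _).mp i.2).1.coprime_of_ne ((hPmem _).mp j.2).1 hne)
    exact hcop.pow
  obtain ⟨s, hs⟩ := Ideal.exists_forall_sub_mem_ideal
    (I := fun i : ↥P => (i : Ideal (𝓞 K)) ^ (n i + 1)) hpair s₀
  have hx₀ : ∀ i : ↥P, r + g * s ∉ (i : Ideal (𝓞 K)) ^ (n i + 1) := by
    intro i hmem
    apply hs₀ i
    have hdd : g * (s - s₀ i) ∈ (i : Ideal (𝓞 K)) ^ (n i + 1) :=
      Ideal.mul_mem_left _ g (hs i)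
    have heq : r + g * s₀ i = (r + g * s) - g * (s - s₀ i) := by ring
    rw [heq]
    exact Ideal.sub_mem _ hmem hdd
  have hJ : Ideal.span ({g} : Set (𝓞 K)) * q ≠ ⊥ := by
    rw [Ne, Ideal.mul_eq_bot]
    tauto
  obtain ⟨w, hwJ, hw0⟩ := Submodule.exists_mem_ne_zero_of_ne_bot hJ
  have hwP : ∀ i : ↥P, w ∈ (i : Ideal (𝓞 K)) ^ (n i + 1) := by
    intro i
    have hle : Ideal.span ({g} : Set (𝓞 K)) * q ≤
        (i : Ideal (𝓞 K)) ^ (n i) * (i : Ideal (𝓞 K)) :=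
      Ideal.mul_mono (Ideal.le_of_dvd (hn1 i)) ((hPmem _).mp i.2).2
    rw [← pow_succ] at hle
    exact hle hwJ
  obtain ⟨t, htg, hx0, hxp⟩ :
      ∃ t : 𝓞 K, t ∈ Ideal.span ({g} : Set (𝓞 K)) ∧ r + t ≠ 0 ∧
        ∀ i : ↥P, r + t ∉ (i : Ideal (𝓞 K)) ^ (n i + 1) := by
    have hgsmem : g * s ∈ Ideal.span ({g} : Set (𝓞 K)) :=
      Ideal.mul_mem_right s _ (Ideal.mem_span_singleton_self g)
    by_cases hz : r + g * s = 0
    · refine ⟨g * s + w, Ideal.add_mem _ hgsmem (Ideal.mul_le_left hwJ), ?_, ?_⟩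
      · rw [← add_assoc, hz, zero_add]; exact hw0
      · intro i hmem
        apply hx₀ i
        have heq : r + g * s = (r + (g * s + w)) - w := by ring
        rw [heq]
        exact Ideal.sub_mem _ hmem (hwP i)
    · exact ⟨g * s, hgsmem, hz, hx₀⟩
  obtain ⟨b, hbB, hxb⟩ := h t htg
  obtain ⟨d, hd⟩ : ∃ d, d = b ⊔ Ideal.span ({g} : Set (𝓞 K)) := ⟨_, rfl⟩
  obtain ⟨c, hbdc⟩ : ∃ c, b = d * c :=
    Ideal.dvd_iff_le.mpr (by rw [hd]; exact le_sup_left)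
  have hbbot := (hB b hbB).1
  have hd0 : d ≠ 0 := by
    intro hc
    exact hbbot (by rw [hbdc, hc, zero_mul, Ideal.zero_eq_bot])
  have hgd : Ideal.span ({g} : Set (𝓞 K)) ≤ d := by rw [hd]; exact le_sup_right
  have hxd : r + t ∈ d := by rw [hd]; exact Submodule.mem_sup_left hxb
  have had : Ideal.span {r} ⊔ Ideal.span {g} ≤ d := by
    refine sup_le ((Ideal.span_singleton_le_iff_mem _).mpr ?_) hgd
    have heq : r = (r + t) - t := by ring
    rw [heq]
    exact Ideal.sub_mem _ hxd (hgd htg)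
  have hcbot : c ≠ ⊥ := by
    rintro rfl
    rw [Ideal.mul_bot] at hbdc
    exact hbbot hbdc
  have hctop : c ≠ ⊤ := by
    rintro rfl
    rw [Ideal.mul_top] at hbdc
    exact hcon ⟨b, hbB, hbdc ▸ had⟩
  have hcq : c ⊔ q = ⊤ := by
    by_contra hne
    obtain ⟨p, hpmax, hple⟩ := Ideal.exists_le_maximal _ hne
    have hcp : c ≤ p := le_sup_left.trans hple
    have hqp : q ≤ p := le_sup_right.trans hple
    have hpP : p ∈ P := (hPmem p).mpr ⟨hpmax, hqp⟩
    have hp0 : p ≠ ⊥ := hpbot ⟨p, hpP⟩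
    have hWg : (Ideal.span ({r + t} : Set (𝓞 K)) ⊔ Ideal.span ({g} : Set (𝓞 K)) * p) ∣
        Ideal.span ({g} : Set (𝓞 K)) := by
      refine dvd_aux hpmax hp0 (n ⟨p, hpP⟩) _ _ (Ideal.span {r + t}) hg'
        (by simpa [Ideal.span_singleton_eq_bot] using hx0)
        (Ideal.dvd_iff_le.mpr le_sup_right) (Ideal.dvd_iff_le.mpr le_sup_left)
        (hn1 ⟨p, hpP⟩) ?_
      intro hc
      exact hxp ⟨p, hpP⟩ ((Ideal.span_singleton_le_iff_mem _).mp (Ideal.le_of_dvd hc))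
    have hgW : Ideal.span ({g} : Set (𝓞 K)) ≤
        Ideal.span ({r + t} : Set (𝓞 K)) ⊔ Ideal.span ({g} : Set (𝓞 K)) * p :=
      Ideal.le_of_dvd hWg
    have hbdp : b ≤ d * p := by rw [hbdc]; exact Ideal.mul_mono_right hcp
    have hxdp : Ideal.span ({r + t} : Set (𝓞 K)) ≤ d * p :=
      (Ideal.span_singleton_le_iff_mem _).mpr (hbdp hxb)
    have hgp : Ideal.span ({g} : Set (𝓞 K)) * p ≤ d * p := Ideal.mul_mono_left hgd
    have hgdp : Ideal.span ({g} : Set (𝓞 K)) ≤ d * p := hgW.trans (sup_le hxdp hgp)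
    have hddp : d = d * p := by
      refine le_antisymm ?_ Ideal.mul_le_left
      nth_rewrite 1 [hd]
      exact sup_le hbdp hgdp
    have hone : (1 : Ideal (𝓞 K)) = p := mul_left_cancel₀ hd0 (by rw [mul_one, ← hddp])
    exact hpmax.ne_top (by rw [← hone, Ideal.one_eq_top])
  exact ⟨(b, d, c), hbB, hbdc, had, hctop, hcbot, hcq⟩

/-- **Theorem.** Principal ideal version: if `D = ∅` and `r + (g) ⊆ M_B`, then
`(r) + (g) ⊆ 𝔟` for some `𝔟 ∈ B`. -/
theorem coset_in_multiples_principal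
    (K : Type*) [Field K] [NumberField K]
    (B : Set (Ideal (𝓞 K)))
    (hB : ∀ b ∈ B, b ≠ ⊥ ∧ b ≠ ⊤)
    (hprim : Primitive K B)
    (hD : Dset K B = ∅)
    (r g : 𝓞 K)
    (h : ∀ t ∈ Ideal.span ({g} : Set (𝓞 K)), r + t ∈ MB K B) :
    ∃ b ∈ B, Ideal.span {r} ⊔ Ideal.span {g} ≤ b := by
  classical
  by_cases hg : g = 0
  · subst hg
    obtain ⟨b, hbB, hrb⟩ : ∃ b ∈ B, r ∈ b := by
      simpa [MB] using h 0 (Ideal.zero_mem _)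
    refine ⟨b, hbB, sup_le ((Ideal.span_singleton_le_iff_mem _).mpr hrb) ?_⟩
    rw [Ideal.span_singleton_eq_bot.mpr rfl]
    exact bot_le
  by_contra hcon
  have step := key_step K B hB hg h hcon
  choose f hf1 hf2 hf3 hf4 hf5 hf6 using step
  have hg' : Ideal.span ({g} : Set (𝓞 K)) ≠ ⊥ := by
    simpa [Ideal.span_singleton_eq_bot] using hg
  have hne : ∀ q : {q : Ideal (𝓞 K) // q ≠ ⊥},
      (q : Ideal (𝓞 K)) * (f q q.2).2.2 ≠ ⊥ := by
    intro q hc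
    rcases Ideal.mul_eq_bot.mp hc with hc' | hc'
    · exact q.2 hc'
    · exact hf5 q q.2 hc'
  set F : ℕ → {q : Ideal (𝓞 K) // q ≠ ⊥} := fun m =>
    Nat.rec ⟨⊤, by simp⟩ (fun _ Fq => ⟨(Fq : Ideal (𝓞 K)) * (f Fq Fq.2).2.2, hne Fq⟩) m
    with hF
  have hFsucc : ∀ m, (F (m + 1) : Ideal (𝓞 K)) =
      (F m : Ideal (𝓞 K)) * (f (F m) (F m).2).2.2 := fun m => rfl
  set bb : ℕ → Ideal (𝓞 K) := fun m => (f (F m) (F m).2).1 with hbb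
  set dd : ℕ → Ideal (𝓞 K) := fun m => (f (F m) (F m).2).2.1 with hdd
  set cc : ℕ → Ideal (𝓞 K) := fun m => (f (F m) (F m).2).2.2 with hcc
  have hQle : ∀ k m : ℕ, k < m → (F m : Ideal (𝓞 K)) ≤ cc k := by
    intro k m hkm
    induction m with
    | zero => omega
    | succ m ih =>
      rcases Nat.lt_succ_iff_lt_or_eq.mp hkm with hkm' | rfl
      · exact le_trans (by rw [hFsucc m]; exact Ideal.mul_le_left) (ih hkm')
      · rw [hFsucc k]
        exact Ideal.mul_le_right
  have hcoplt : ∀ k m : ℕ, k < m → cc m ⊔ cc k = ⊤ := by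
    intro k m hkm
    have h1 : cc m ⊔ (F m : Ideal (𝓞 K)) = ⊤ := hf6 (F m) (F m).2
    exact eq_top_iff.mpr (le_trans h1.ge (sup_le_sup_left (hQle k m hkm) _))
  have hcop : ∀ k m : ℕ, k ≠ m → cc k ⊔ cc m = ⊤ := by
    intro k m hkm
    rcases lt_or_gt_of_ne hkm with hlt | hgt
    · rw [sup_comm]; exact hcoplt k m hlt
    · exact hcoplt m k hgt
  have hcT : ∀ m, cc m ≠ ⊤ := fun m => hf4 (F m) (F m).2
  have hcB : ∀ m, cc m ≠ ⊥ := fun m => hf5 (F m) (F m).2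
  have ha0 : (Ideal.span {r} ⊔ Ideal.span {g} : Ideal (𝓞 K)) ≠ 0 := by
    intro hc
    rw [Ideal.zero_eq_bot] at hc
    exact hg' (le_bot_iff.mp (le_trans le_sup_right hc.le))
  haveI : Fintype {I : Ideal (𝓞 K) // I ∣ (Ideal.span {r} ⊔ Ideal.span {g} : Ideal (𝓞 K))} :=
    UniqueFactorizationMonoid.fintypeSubtypeDvd _ ha0
  set FF : ℕ → {I : Ideal (𝓞 K) // I ∣ (Ideal.span {r} ⊔ Ideal.span {g} : Ideal (𝓞 K))} :=
    fun m => ⟨dd m, Ideal.dvd_iff_le.mpr (hf3 (F m) (F m).2)⟩ with hFF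
  obtain ⟨y, hy⟩ := Finite.exists_infinite_fiber FF
  have hNinf : (FF ⁻¹' {y}).Infinite := Set.infinite_coe_iff.mp hy
  have hdN : ∀ m ∈ FF ⁻¹' {y}, dd m = (y : Ideal (𝓞 K)) := by
    intro m hm
    have hmy : FF m = y := Set.mem_singleton_iff.mp hm
    exact congrArg Subtype.val hmy
  have hinj : Set.InjOn cc (FF ⁻¹' {y}) := by
    intro m1 _ m2 _ hceq
    by_contra hnem
    have htot := hcop m1 m2 hnem
    rw [hceq, sup_idem] at htot
    exact hcT m2 htot
  have hmem : (y : Ideal (𝓞 K)) ∈ Dset K B := by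
    obtain ⟨m0, hm0⟩ := hNinf.nonempty
    refine ⟨?_, cc '' (FF ⁻¹' {y}), hNinf.image hinj, ?_, ?_, ?_⟩
    · intro hc
      apply (hB (bb m0) (hf1 (F m0) (F m0).2)).1
      have hbeq : bb m0 = dd m0 * cc m0 := hf2 (F m0) (F m0).2
      rw [hbeq, hdN m0 hm0, hc, ← Ideal.zero_eq_bot, zero_mul]
    · rintro c' ⟨m, _, rfl⟩
      exact ⟨hcB m, hcT m⟩
    · rintro c1 ⟨m1, hm1, rfl⟩ c2 ⟨m2, hm2, rfl⟩ hnem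
      have hm12 : m1 ≠ m2 := by rintro rfl; exact hnem rfl
      exact hcop m1 m2 hm12
    · rintro c' ⟨m, hm, rfl⟩
      have hbeq : bb m = dd m * cc m := hf2 (F m) (F m).2
      rw [← hdN m hm, ← hbeq]
      exact hf1 (F m) (F m).2
  rw [hD] at hmem
  exact hmem

end BFree
end

section
/- Let r, g ∈ O_K, not both zero, and set 𝔞 = (r) + (g). Then there exist a sequence (x_i)_{i≥1} of elements of O_K and a sequence (c_i)_{i≥1} of nonzero ideals of O_K such that: (r + x_i g) = 𝔞 · c_i for every i ≥ 1; each c_i is coprime to 𝔞, i.e. c_i + 𝔞 = O_K; and c_i + c_j = O_K whenever i ≠ j. In particular, (r + x_i g) + (r + x_j g) = 𝔞 for all i ≠ j. -/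
open NumberField UniqueFactorizationMonoid

lemma key_step {R : Type*} [CommRing R] [IsDedekindDomain R] (r g : R) (hg : g ≠ 0)
    (b : Ideal R) (hb : b ≠ ⊥) :
    ∃ (x : R) (c : Ideal R),
      Ideal.span {r + x * g} = (Ideal.span {r} ⊔ Ideal.span {g}) * c ∧ c ≠ ⊥ ∧ c ⊔ b = ⊤ := by
  classical
  set 𝔞 : Ideal R := Ideal.span {r} ⊔ Ideal.span {g} with h𝔞def
  have hgmem : g ∈ 𝔞 := Ideal.mem_sup_right (Ideal.mem_span_singleton_self g)
  have hrmem : r ∈ 𝔞 := Ideal.mem_sup_left (Ideal.mem_span_singleton_self r)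
  have h𝔞 : 𝔞 ≠ ⊥ := by
    intro h
    rw [h] at hgmem
    exact hg (by simpa using hgmem)
  have hm : 𝔞 * b ≠ 0 := mul_ne_zero (by simpa using h𝔞) (by simpa using hb)
  set s : Finset (Ideal R) := (factors (𝔞 * b)).toFinset with hs
  have hsprime : ∀ p ∈ s, Prime p := fun p hp =>
    prime_of_factor _ (Multiset.mem_toFinset.mp hp)
  have hx : ∀ p ∈ s, ∃ u : R, r + u * g ∉ 𝔞 * p := by
    intro p hp
    by_cases hr : r ∈ 𝔞 * p
    · refine ⟨1, fun hmem => ?_⟩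
      have hgp : g ∈ 𝔞 * p := by
        have := Ideal.sub_mem _ hmem hr
        simpa using this
      have hle : 𝔞 ≤ 𝔞 * p := by
        rw [h𝔞def]
        exact sup_le (Ideal.span_le.mpr (by simpa using hr))
          (Ideal.span_le.mpr (by simpa using hgp))
      have hdvd : 𝔞 * p ∣ 𝔞 := Ideal.dvd_iff_le.mpr hle
      have : p ∣ 1 := by
        have h1 : 𝔞 * p ∣ 𝔞 * 1 := by simpa using hdvd
        exact (mul_dvd_mul_iff_left h𝔞).mp h1
      exact (hsprime p hp).not_unit (isUnit_of_dvd_one this)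
    · exact ⟨0, by simpa using hr⟩
  choose t ht using hx
  obtain ⟨y, hy⟩ := IsDedekindDomain.exists_forall_sub_mem_ideal (s := s)
    (fun p => p) (fun _ => 1) hsprime (fun i _ j _ hij => hij) (fun p => t p p.2)
  simp only [pow_one] at hy
  have hprodne : (∏ p ∈ s, p) ≠ ⊥ := by
    rw [← Ideal.zero_eq_bot]
    exact Finset.prod_ne_zero_iff.mpr fun p hp => (hsprime p hp).ne_zero
  obtain ⟨n, hnmem, hn0⟩ := Submodule.exists_mem_ne_zero_of_ne_bot hprodne
  have hnp : ∀ p ∈ s, n ∈ p := fun p hp =>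
    (Ideal.prod_le_inf.trans (Finset.inf_le hp)) hnmem
  have claimA : ∀ z : R, (∀ p (hp : p ∈ s), z - t p hp ∈ p) →
      ∀ p (hp : p ∈ s), r + z * g ∉ 𝔞 * p := by
    intro z hz p hp hmem
    apply ht p hp
    have hsub : (z - t p hp) * g ∈ 𝔞 * p := by
      rw [mul_comm 𝔞 p]
      exact Ideal.mul_mem_mul (hz p hp) hgmem
    have := Ideal.sub_mem _ hmem hsub
    convert this using 1
    ring
  have hy' : ∀ p (hp : p ∈ s), (y + n) - t p hp ∈ p := by
    intro p hp
    have : (y - t p hp) + n ∈ p := Ideal.add_mem _ (hy p hp) (hnp p hp)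
    convert this using 1
    ring
  obtain ⟨z, hzA, hz0⟩ : ∃ z : R, (∀ p (hp : p ∈ s), r + z * g ∉ 𝔞 * p) ∧ r + z * g ≠ 0 := by
    by_cases h0 : r + y * g = 0
    · refine ⟨y + n, claimA _ hy', ?_⟩
      intro h0'
      apply hn0
      have : n * g = 0 := by
        linear_combination h0' - h0
      exact (mul_eq_zero.mp this).resolve_right hg
    · exact ⟨y, claimA _ hy, h0⟩
  have hle : Ideal.span {r + z * g} ≤ 𝔞 := Ideal.span_le.mpr (by
    rintro _ rfl
    exact Ideal.add_mem _ hrmem (Ideal.mul_mem_left _ _ hgmem))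
  obtain ⟨c, hc⟩ : 𝔞 ∣ Ideal.span {r + z * g} := Ideal.dvd_iff_le.mpr hle
  have hcne : c ≠ ⊥ := by
    rintro rfl
    rw [Ideal.mul_bot] at hc
    exact hz0 (by simpa [Ideal.span_singleton_eq_bot] using hc)
  refine ⟨z, c, hc, hcne, ?_⟩
  by_contra hne
  obtain ⟨p, hpmax, hpge⟩ := Ideal.exists_le_maximal _ hne
  have hpne : p ≠ ⊥ := by
    rintro rfl
    exact hb (le_bot_iff.mp ((le_sup_right.trans hpge)))
  have hpPrime : Prime p := Ideal.prime_of_isPrime hpne hpmax.isPrime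
  have hpdvd : p ∣ 𝔞 * b := dvd_mul_of_dvd_right (Ideal.dvd_iff_le.mpr (le_sup_right.trans hpge)) 𝔞
  obtain ⟨q, hq, hassoc⟩ := exists_mem_factors_of_dvd hm hpPrime.irreducible hpdvd
  have hps : p ∈ s := by
    rw [hs, Multiset.mem_toFinset]
    rwa [associated_iff_eq.mp hassoc]
  apply hzA p hps
  have : Ideal.span {r + z * g} ≤ 𝔞 * p := hc ▸ Ideal.mul_mono_right (le_sup_left.trans hpge)
  exact this (Ideal.mem_span_singleton_self _)

/-- **Lemma.** For `r, g ∈ 𝓞 K` not both zero, there are `x_i ∈ 𝓞 K` and nonzero ideals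
`c_i`, pairwise coprime and coprime to `𝔞 = (r) + (g)`, with `(r + x_i g) = 𝔞 · c_i`;
in particular `(r + x_i g) + (r + x_j g) = 𝔞` for `i ≠ j`. -/
theorem exists_coprime_combinations
    (K : Type*) [Field K] [NumberField K]
    (r g : 𝓞 K) (h : ¬ (r = 0 ∧ g = 0)) :
    ∃ (x : ℕ → 𝓞 K) (c : ℕ → Ideal (𝓞 K)),
      (∀ i, Ideal.span {r + x i * g} = (Ideal.span {r} ⊔ Ideal.span {g}) * c i) ∧
      (∀ i, c i ≠ ⊥) ∧
      (∀ i, c i ⊔ (Ideal.span {r} ⊔ Ideal.span {g}) = ⊤) ∧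
      (∀ i j, i ≠ j → c i ⊔ c j = ⊤) ∧
      (∀ i j, i ≠ j →
        Ideal.span {r + x i * g} ⊔ Ideal.span {r + x j * g}
          = Ideal.span {r} ⊔ Ideal.span ({g} : Set (𝓞 K))) := by
  classical
  by_cases hg : g = 0
  · subst hg
    have hr : r ≠ 0 := fun hr => h ⟨hr, rfl⟩
    refine ⟨fun _ => 0, fun _ => ⊤, ?_, ?_, ?_, ?_, ?_⟩ <;>
      simp [Set.singleton_zero, Ideal.span_zero]
  · set 𝔞 : Ideal (𝓞 K) := Ideal.span {r} ⊔ Ideal.span {g} with h𝔞def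
    have h𝔞 : 𝔞 ≠ ⊥ := by
      intro hbot
      have : g ∈ 𝔞 := Ideal.mem_sup_right (Ideal.mem_span_singleton_self g)
      rw [hbot] at this
      exact hg (by simpa using this)
    -- choice function for the key step
    have key' : ∀ b : Ideal (𝓞 K), ∃ p : 𝓞 K × Ideal (𝓞 K), b ≠ ⊥ →
        Ideal.span {r + p.1 * g} = 𝔞 * p.2 ∧ p.2 ≠ ⊥ ∧ p.2 ⊔ b = ⊤ := by
      intro b
      by_cases hb : b = ⊥
      · exact ⟨(0, ⊥), fun hb' => absurd hb hb'⟩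
      · obtain ⟨x, c, h1, h2, h3⟩ := key_step r g hg b hb
        exact ⟨(x, c), fun _ => ⟨h1, h2, h3⟩⟩
    choose P hP using key'
    -- recursive sequence of "avoid" ideals
    let B : ℕ → Ideal (𝓞 K) := fun n => Nat.rec 𝔞 (fun _ b => b * (P b).2) n
    have hB0 : B 0 = 𝔞 := rfl
    have hBsucc : ∀ n, B (n + 1) = B n * (P (B n)).2 := fun n => rfl
    have hBne : ∀ n, B n ≠ ⊥ := by
      intro n
      induction n with
      | zero => exact h𝔞
      | succ n ih =>
        rw [hBsucc, ← Ideal.zero_eq_bot]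
        exact mul_ne_zero (by simpa using ih) (by simpa using (hP (B n) ih).2.1)
    set x : ℕ → 𝓞 K := fun n => (P (B n)).1 with hx
    set c : ℕ → Ideal (𝓞 K) := fun n => (P (B n)).2 with hc
    have hspan : ∀ n, Ideal.span {r + x n * g} = 𝔞 * c n := fun n => (hP (B n) (hBne n)).1
    have hcne : ∀ n, c n ≠ ⊥ := fun n => (hP (B n) (hBne n)).2.1
    have hcop : ∀ n, c n ⊔ B n = ⊤ := fun n => (hP (B n) (hBne n)).2.2
    have hBanti : ∀ m n, m ≤ n → B n ≤ B m := by
      intro m n hmn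
      induction n with
      | zero => simp [Nat.le_zero.mp hmn]
      | succ n ih =>
        rcases Nat.lt_or_ge m (n + 1) with h' | h'
        · exact le_trans (by rw [hBsucc n]; exact Ideal.mul_le_left) (ih (Nat.lt_succ_iff.mp h'))
        · have : m = n + 1 := le_antisymm hmn h'
          simp [this]
    have hBle𝔞 : ∀ n, B n ≤ 𝔞 := fun n => hB0 ▸ hBanti 0 n (Nat.zero_le n)
    have hBlec : ∀ i n, i < n → B n ≤ c i := by
      intro i n hin
      refine le_trans (hBanti (i + 1) n hin) ?_
      rw [hBsucc]
      exact Ideal.mul_le_right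
    have hccop : ∀ i j, i ≠ j → c i ⊔ c j = ⊤ := by
      have main : ∀ i j, i < j → c j ⊔ c i = ⊤ := by
        intro i j hij
        rw [eq_top_iff, ← hcop j]
        exact sup_le_sup_left (hBlec i j hij) _
      intro i j hij
      rcases Nat.lt_or_gt_of_ne hij with h' | h'
      · rw [sup_comm]; exact main i j h'
      · exact main j i h'
    refine ⟨x, c, hspan, hcne, ?_, hccop, ?_⟩
    · intro i
      rw [eq_top_iff, ← hcop i]
      exact sup_le_sup_left (hBle𝔞 i) _
    · intro i j hij
      rw [hspan i, hspan j, ← Ideal.mul_sup, hccop i j hij, Ideal.mul_top]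
end

section
/- Let t ≥ 1 and let r, g_1, …, g_t ∈ O_K, not all zero, and set 𝔞 = (r) + (g_1) + … + (g_t). Then there exist a sequence of tuples (x_{i,1}, …, x_{i,t}) ∈ O_K^t, i ≥ 1, and a sequence (c_i)_{i≥1} of nonzero ideals of O_K such that (r + x_{i,1} g_1 + … + x_{i,t} g_t) = 𝔞 · c_i for every i ≥ 1, each c_i is coprime to 𝔞 (c_i + 𝔞 = O_K), and c_i + c_j = O_K whenever i ≠ j. -/
open UniqueFactorizationMonoid

/-- Key step: find `s ∈ 𝔤` with `(r+s) = 𝔞·c`, `c` nonzero and coprime to `𝔞·𝔟`. -/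
lemma key_lemma {R : Type*} [CommRing R] [IsDedekindDomain R] (r : R) (𝔤 : Ideal R)
    (h𝔞 : Ideal.span {r} ⊔ 𝔤 ≠ ⊥) (𝔟 : Ideal R) (h𝔟 : 𝔟 ≠ ⊥) :
    ∃ s ∈ 𝔤, ∃ c : Ideal R, Ideal.span {r + s} = (Ideal.span {r} ⊔ 𝔤) * c ∧ c ≠ ⊥ ∧
      c ⊔ ((Ideal.span {r} ⊔ 𝔤) * 𝔟) = ⊤ := by
  classical
  set 𝔞 : Ideal R := Ideal.span {r} ⊔ 𝔤 with h𝔞def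
  have hr𝔞 : r ∈ 𝔞 := Ideal.mem_sup_left (Ideal.mem_span_singleton_self r)
  have h𝔤𝔞 : 𝔤 ≤ 𝔞 := le_sup_right
  have h𝔞𝔟 : 𝔞 * 𝔟 ≠ ⊥ := mul_ne_zero h𝔞 h𝔟
  by_cases htop : 𝔞 * 𝔟 = ⊤
  · -- trivial case: 𝔞 = ⊤, 𝔟 = ⊤
    have h𝔞top : 𝔞 = ⊤ := by
      have : 𝔞 * 𝔟 ≤ 𝔞 := Ideal.mul_le_left
      rw [htop] at this; exact top_le_iff.mp this
    -- find a nonzero element of the coset r + 𝔤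
    obtain ⟨s, hs𝔤, hsne⟩ : ∃ s ∈ 𝔤, r + s ≠ 0 := by
      by_cases hr : r = 0
      · have h𝔤ne : 𝔤 ≠ ⊥ := by
          intro hb
          apply h𝔞
          rw [h𝔞def, hr, hb, Ideal.span_singleton_eq_bot.mpr rfl, sup_bot_eq]
        obtain ⟨s, hs, hsne⟩ := Submodule.exists_mem_ne_zero_of_ne_bot h𝔤ne
        exact ⟨s, hs, by simpa [hr] using hsne⟩
      · exact ⟨0, zero_mem _, by simpa using hr⟩
    refine ⟨s, hs𝔤, Ideal.span {r + s}, by rw [h𝔞top, ← Ideal.one_eq_top, one_mul], ?_, by simp [htop]⟩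
    simpa [Ideal.span_singleton_eq_bot] using hsne
  -- main case
  set S : Finset (Ideal R) := (normalizedFactors (𝔞 * 𝔟)).toFinset with hSdef
  have hS : ∀ p ∈ S, p.IsPrime ∧ 𝔞 * 𝔟 ≤ p := by
    intro p hp
    exact (Ideal.mem_normalizedFactors_iff h𝔞𝔟).mp (Multiset.mem_toFinset.mp hp)
  have hSbot : ∀ p ∈ S, p ≠ ⊥ := by
    intro p hp hbot
    exact h𝔞𝔟 (le_bot_iff.mp (hbot ▸ (hS p hp).2))
  have hSprime : ∀ p ∈ S, Prime p := fun p hp =>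
    Ideal.prime_of_isPrime (hSbot p hp) (hS p hp).1
  have hSmax : ∀ p ∈ S, p.IsMaximal := fun p hp =>
    Ring.DimensionLEOne.maximalOfPrime (hSbot p hp) (hS p hp).1
  -- choose s_p ∈ 𝔤 with r + s_p ∉ 𝔞 p
  have hσex : ∀ p ∈ S, ∃ s, s ∈ 𝔤 ∧ r + s ∉ 𝔞 * p := by
    intro p hp
    by_contra hcon
    push_neg at hcon
    have hr' : r ∈ 𝔞 * p := by simpa using hcon 0 (zero_mem _)
    have h𝔤' : 𝔤 ≤ 𝔞 * p := by
      intro s hs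
      have := hcon s hs
      have : (r + s) - r ∈ 𝔞 * p := Ideal.sub_mem _ this hr'
      simpa using this
    have hle : 𝔞 ≤ 𝔞 * p := by
      rw [h𝔞def]
      refine sup_le ?_ h𝔤'
      rwa [Ideal.span_le, Set.singleton_subset_iff]
    have hdvd : 𝔞 * p ∣ 𝔞 := Ideal.dvd_iff_le.mpr (by exact hle)
    obtain ⟨d, hd⟩ := hdvd
    have heq : 𝔞 * (p * d) = 𝔞 * ⊤ := by
      rw [← mul_assoc, ← hd, ← Ideal.one_eq_top, mul_one]
    have hpd : (⊤ : Ideal R) = p * d := (mul_left_cancel₀ h𝔞 heq).symm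
    have : p = ⊤ := top_le_iff.mp (hpd.le.trans Ideal.mul_le_left)
    exact ((hS p hp).1.ne_top) this
  choose! σ hσ𝔤 hσnot using hσex
  -- choose u_p ≡ 1 mod p, ≡ 0 mod q for q ∈ S, q ≠ p
  have huex : ∀ p ∈ S, ∃ u : R, u - 1 ∈ p ∧ ∀ q ∈ S, q ≠ p → u ∈ q := by
    intro p hp
    obtain ⟨u, hu⟩ := IsDedekindDomain.exists_forall_sub_mem_ideal (s := S) (fun q => q)
      (fun _ => 1) (fun q hq => hSprime q hq) (fun i _ j _ hij => hij)
      (fun q => if (q : Ideal R) = p then 1 else 0)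
    refine ⟨u, ?_, ?_⟩
    · have := hu p hp
      simpa using this
    · intro q hq hqp
      have := hu q hq
      simpa [hqp] using this
  choose! u hu1 hu2 using huex
  set s : R := ∑ p ∈ S, u p * σ p with hsdef
  have hs𝔤 : s ∈ 𝔤 := Ideal.sum_mem _ (fun p hp => Ideal.mul_mem_left _ _ (hσ𝔤 p hp))
  -- for each p ∈ S, (r + s) ∉ 𝔞 p
  have hkey : ∀ p ∈ S, r + s ∉ 𝔞 * p := by
    intro p hp hmem
    apply hσnot p hp
    have hdiff : s - σ p ∈ 𝔞 * p := by
      have hsum : s = u p * σ p + ∑ q ∈ S.erase p, u q * σ q :=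
        (Finset.add_sum_erase S _ hp).symm
      have h1 : (u p - 1) * σ p ∈ 𝔞 * p := by
        rw [mul_comm 𝔞 p]
        exact Ideal.mul_mem_mul (hu1 p hp) (h𝔤𝔞 (hσ𝔤 p hp))
      have h2 : ∑ q ∈ S.erase p, u q * σ q ∈ 𝔞 * p := by
        refine Ideal.sum_mem _ (fun q hq => ?_)
        obtain ⟨hqp, hqS⟩ := Finset.mem_erase.mp hq
        rw [mul_comm 𝔞 p]
        exact Ideal.mul_mem_mul (hu2 q hqS p hp hqp.symm) (h𝔤𝔞 (hσ𝔤 q hqS))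
      have : s - σ p = (u p - 1) * σ p + ∑ q ∈ S.erase p, u q * σ q := by
        rw [hsum]; ring
      rw [this]
      exact Ideal.add_mem _ h1 h2
    have : r + σ p = (r + s) - (s - σ p) := by ring
    rw [this]
    exact Ideal.sub_mem _ hmem hdiff
  have hy𝔞 : r + s ∈ 𝔞 := Ideal.add_mem _ hr𝔞 (h𝔤𝔞 hs𝔤)
  have hSne : S.Nonempty := by
    rw [hSdef]
    by_contra hne
    rw [Finset.not_nonempty_iff_eq_empty, Multiset.toFinset_eq_empty] at hne
    have hass := UniqueFactorizationMonoid.prod_normalizedFactors h𝔞𝔟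
    rw [hne, Multiset.prod_zero] at hass
    exact htop (Ideal.isUnit_iff.mp (associated_one_iff_isUnit.mp hass.symm))
  obtain ⟨p₀, hp₀⟩ := hSne
  have hyne : r + s ≠ 0 := fun h0 => hkey p₀ hp₀ (h0 ▸ zero_mem _)
  -- define c
  obtain ⟨c, hc⟩ : 𝔞 ∣ Ideal.span {r + s} := Ideal.dvd_iff_le.mpr
    (by rwa [Ideal.span_le, Set.singleton_subset_iff])
  have hcne : c ≠ ⊥ := by
    intro hb
    rw [hb, Ideal.mul_bot] at hc
    exact hyne (Ideal.span_singleton_eq_bot.mp hc)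
  refine ⟨s, hs𝔤, c, hc, hcne, ?_⟩
  by_contra hcop
  obtain ⟨𝔪, h𝔪max, h𝔪ge⟩ := Ideal.exists_le_maximal _ hcop
  have h𝔪S : 𝔪 ∈ S := by
    rw [hSdef, Multiset.mem_toFinset, Ideal.mem_normalizedFactors_iff h𝔞𝔟]
    exact ⟨h𝔪max.isPrime, le_trans le_sup_right h𝔪ge⟩
  have hc𝔪 : c ≤ 𝔪 := le_trans le_sup_left h𝔪ge
  apply hkey 𝔪 h𝔪S
  have : 𝔞 * c ≤ 𝔞 * 𝔪 := Ideal.mul_mono_right hc𝔪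
  rw [← hc] at this
  exact this (Ideal.mem_span_singleton_self _)

/-- From a one-step coprime-avoidance principle, build an infinite pairwise coprime sequence. -/
lemma exists_seq_aux {R : Type*} [CommRing R] [IsDedekindDomain R] {α : Type*} [Inhabited α]
    (F : α → R) (𝔞 : Ideal R) (h𝔞 : 𝔞 ≠ ⊥)
    (key : ∀ 𝔟 : Ideal R, 𝔟 ≠ ⊥ →
      ∃ (a : α) (c : Ideal R), Ideal.span {F a} = 𝔞 * c ∧ c ≠ ⊥ ∧ c ⊔ (𝔞 * 𝔟) = ⊤) :
    ∃ (a : ℕ → α) (c : ℕ → Ideal R),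
      (∀ i, Ideal.span {F (a i)} = 𝔞 * c i) ∧ (∀ i, c i ≠ ⊥) ∧
      (∀ i, c i ⊔ 𝔞 = ⊤) ∧ (∀ i j, i ≠ j → c i ⊔ c j = ⊤) := by
  have key' : ∀ 𝔟 : Ideal R, ∃ (a : α) (c : Ideal R), 𝔟 ≠ ⊥ →
      Ideal.span {F a} = 𝔞 * c ∧ c ≠ ⊥ ∧ c ⊔ (𝔞 * 𝔟) = ⊤ := by
    intro 𝔟
    by_cases hb : 𝔟 = ⊥
    · exact ⟨default, ⊥, fun h => absurd hb h⟩
    · obtain ⟨a, c, h1, h2, h3⟩ := key 𝔟 hb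
      exact ⟨a, c, fun _ => ⟨h1, h2, h3⟩⟩
  choose f cf hcf using key'
  -- accumulated ideal
  let A : ℕ → Ideal R := fun n => Nat.rec 𝔞 (fun _ I => I * cf I) n
  have hA0 : A 0 = 𝔞 := rfl
  have hAsucc : ∀ n, A (n + 1) = A n * cf (A n) := fun n => rfl
  have hAne : ∀ n, A n ≠ ⊥ := by
    intro n
    induction n with
    | zero => exact h𝔞
    | succ n ih =>
      rw [hAsucc]
      exact mul_ne_zero ih (hcf (A n) ih).2.1
  refine ⟨fun n => f (A n), fun n => cf (A n), fun n => (hcf (A n) (hAne n)).1,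
    fun n => (hcf (A n) (hAne n)).2.1, ?_, ?_⟩
  · intro i
    have h3 := (hcf (A i) (hAne i)).2.2
    exact top_le_iff.mp (h3 ▸ sup_le_sup_left Ideal.mul_le_left (cf (A i)))
  · have hanti : Antitone A := antitone_nat_of_succ_le fun n =>
      by rw [hAsucc n]; exact Ideal.mul_le_left
    have hcle : ∀ i j, i < j → A j ≤ cf (A i) := by
      intro i j hij
      refine le_trans (hanti hij) ?_
      rw [hAsucc i]
      exact Ideal.mul_le_right
    have main : ∀ i j, i < j → cf (A j) ⊔ cf (A i) = ⊤ := by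
      intro i j hij
      have h3 := (hcf (A j) (hAne j)).2.2
      refine top_le_iff.mp (h3 ▸ sup_le_sup_left ?_ (cf (A j)))
      exact le_trans Ideal.mul_le_right (hcle i j hij)
    intro i j hij
    rcases hij.lt_or_gt with h | h
    · rw [sup_comm]; exact main i j h
    · exact main j i h


open NumberField

/-- **Lemma.** For `r, g₁, …, g_t ∈ 𝓞 K` not all zero, there are tuples
`(x_{i,1}, …, x_{i,t}) ∈ (𝓞 K)^t` and nonzero ideals `c_i`, pairwise coprime and coprime
to `𝔞 = (r) + (g₁) + … + (g_t)`, with `(r + Σ_k x_{i,k} g_k) = 𝔞 · c_i`. -/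
theorem exists_coprime_combinations_multi
    (K : Type*) [Field K] [NumberField K]
    (t : ℕ) (ht : 1 ≤ t)
    (r : 𝓞 K) (g : Fin t → 𝓞 K)
    (h : ¬ (r = 0 ∧ ∀ k, g k = 0)) :
    ∃ (x : ℕ → Fin t → 𝓞 K) (c : ℕ → Ideal (𝓞 K)),
      (∀ i, Ideal.span {r + ∑ k, x i k * g k}
          = (Ideal.span {r} ⊔ ⨆ k, Ideal.span {g k}) * c i) ∧
      (∀ i, c i ≠ ⊥) ∧
      (∀ i, c i ⊔ (Ideal.span {r} ⊔ ⨆ k, Ideal.span {g k}) = ⊤) ∧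
      (∀ i j, i ≠ j → c i ⊔ c j = ⊤) := by
  set 𝔤 : Ideal (𝓞 K) := ⨆ k, Ideal.span {g k} with h𝔤def
  set 𝔞 : Ideal (𝓞 K) := Ideal.span {r} ⊔ 𝔤 with h𝔞def
  have h𝔤range : 𝔤 = Ideal.span (Set.range g) := by
    rw [h𝔤def, Ideal.span, Submodule.span_range_eq_iSup]
  have h𝔞ne : 𝔞 ≠ ⊥ := by
    intro hb
    apply h
    constructor
    · have : Ideal.span {r} ≤ ⊥ := hb ▸ le_sup_left
      exact Ideal.span_singleton_eq_bot.mp (le_bot_iff.mp this)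
    · intro k
      have hk : Ideal.span {g k} ≤ 𝔤 := le_iSup (fun k => Ideal.span {g k}) k
      have : Ideal.span {g k} ≤ ⊥ := hb ▸ hk.trans le_sup_right
      exact Ideal.span_singleton_eq_bot.mp (le_bot_iff.mp this)
  have key : ∀ 𝔟 : Ideal (𝓞 K), 𝔟 ≠ ⊥ →
      ∃ (a : Fin t → 𝓞 K) (c : Ideal (𝓞 K)),
        Ideal.span {r + ∑ k, a k * g k} = 𝔞 * c ∧ c ≠ ⊥ ∧ c ⊔ (𝔞 * 𝔟) = ⊤ := by
    intro 𝔟 h𝔟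
    obtain ⟨s, hs𝔤, c, hc1, hc2, hc3⟩ := key_lemma r 𝔤 (h𝔞def ▸ h𝔞ne) 𝔟 h𝔟
    rw [h𝔤range] at hs𝔤
    obtain ⟨a, ha⟩ := Ideal.mem_span_range_iff_exists_fun.mp hs𝔤
    exact ⟨a, c, by rw [ha]; exact hc1, hc2, hc3⟩
  haveI : Inhabited (Fin t → 𝓞 K) := ⟨fun _ => 0⟩
  obtain ⟨x, c, h1, h2, h3, h4⟩ := exists_seq_aux
    (fun a : Fin t → 𝓞 K => r + ∑ k, a k * g k) 𝔞 h𝔞ne key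
  exact ⟨x, c, h1, h2, h3, h4⟩
end

section
/- Let A be a nonempty finite alphabet, x ∈ A^ℤ, and let s, q ≥ 1 be positive integers. The following are equivalent: (a) Per(x, s, a) = Per(x, s, a) − q for all a ∈ A; (b) Per(x, s, a) = Per(x, s, a) − kq for all a ∈ A and all k ∈ ℤ; (c) Per(x, s, a) = Per(x, gcd(s,q), a) for all a ∈ A; (d) Per(x, s, a) ⊆ Per(x, q, a) for all a ∈ A; (e) Per(x, s) ⊆ Per(x, q). -/
/-- `Per(x, s, a) = {n ∈ ℤ : x(n + ks) = a for all k ∈ ℤ}`. -/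
def PerSym {A : Type*} (x : ℤ → A) (s : ℕ) (a : A) : Set ℤ :=
  {n : ℤ | ∀ k : ℤ, x (n + k * s) = a}

/-- `Per(x, s) = {n ∈ ℤ : x(n + ks) = x(n) for all k ∈ ℤ}`. -/
def PerAll {A : Type*} (x : ℤ → A) (s : ℕ) : Set ℤ :=
  {n : ℤ | ∀ k : ℤ, x (n + k * s) = x n}

lemma image_sub_mem (P : Set ℤ) (c n : ℤ) :
    n ∈ (fun m => m - c) '' P ↔ n + c ∈ P := by
  constructor
  · rintro ⟨m, hm, rfl⟩
    simpa using hm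
  · intro h
    exact ⟨n + c, h, by ring⟩

lemma perSym_val {A : Type*} {x : ℤ → A} {s : ℕ} {a : A} {n : ℤ}
    (h : n ∈ PerSym x s a) : x n = a := by
  simpa using h 0

lemma perSym_shift {A : Type*} {x : ℤ → A} {s : ℕ} {a : A} {n : ℤ}
    (h : n ∈ PerSym x s a) (j : ℤ) : n + j * s ∈ PerSym x s a := by
  intro k
  have := h (j + k)
  rw [show n + j * s + k * s = n + (j + k) * s by ring]
  exact this

lemma perSym_mem_perAll {A : Type*} {x : ℤ → A} {s : ℕ} {a : A} {n : ℤ}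
    (h : n ∈ PerSym x s a) : n ∈ PerAll x s := by
  intro k
  rw [h k, perSym_val h]

lemma perSym_mono {A : Type*} (x : ℤ → A) {d t : ℕ} (hd : d ∣ t) (a : A) :
    PerSym x d a ⊆ PerSym x t a := by
  obtain ⟨m, rfl⟩ := hd
  intro n hn k
  have := hn (k * m)
  rw [show n + k * ((d * m : ℕ) : ℤ) = n + k * m * d by push_cast; ring]
  exact this

/-- **Proposition.** Equivalent conditions relating periodicity data at scales `s` and `q`. -/
theorem per_equiv_conditions
    {A : Type*} [Fintype A] [Nonempty A]
    (x : ℤ → A) (s q : ℕ) (hs : 0 < s) (hq : 0 < q) :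
    List.TFAE
      [ ∀ a : A, PerSym x s a = (fun n => n - (q : ℤ)) '' PerSym x s a,
        ∀ a : A, ∀ k : ℤ, PerSym x s a = (fun n => n - k * q) '' PerSym x s a,
        ∀ a : A, PerSym x s a = PerSym x (Nat.gcd s q) a,
        ∀ a : A, PerSym x s a ⊆ PerSym x q a,
        PerAll x s ⊆ PerAll x q ] := by
  tfae_have 1 → 2
  · intro h a k
    have key : ∀ n : ℤ, n ∈ PerSym x s a ↔ n + q ∈ PerSym x s a := by
      intro n
      conv_lhs => rw [h a]
      exact image_sub_mem _ _ _
    have main : ∀ k : ℤ, ∀ n : ℤ, n ∈ PerSym x s a ↔ n + k * q ∈ PerSym x s a := by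
      intro k
      induction k using Int.induction_on with
      | zero => simp
      | succ i ih =>
        intro n
        rw [show n + ((i : ℤ) + 1) * q = (n + (i : ℤ) * q) + q by ring]
        exact (ih n).trans (key _)
      | pred i ih =>
        intro n
        have h1 : (n + (-(i : ℤ) - 1) * q) + q = n + (-(i : ℤ)) * q := by ring
        exact (ih n).trans (by rw [← h1]; exact (key _).symm)
    ext n
    rw [image_sub_mem]
    exact main k n
  tfae_have 2 → 3
  · intro h a
    ext n
    constructor
    · intro hn k
      set α := Int.gcdA (s : ℤ) (q : ℤ) with hα
      set β := Int.gcdB (s : ℤ) (q : ℤ) with hβ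
      have hbez : ((Nat.gcd s q : ℕ) : ℤ) = (s : ℤ) * α + (q : ℤ) * β := by
        have := Int.gcd_eq_gcd_ab (s : ℤ) (q : ℤ)
        simpa [Int.gcd_natCast_natCast] using this
      have h1 : n + (k * β) * q ∈ PerSym x s a := by
        have := (h a (k * β)) ▸ hn
        rw [h a (k * β), image_sub_mem] at hn
        exact hn
      have := h1 (k * α)
      rw [show n + k * β * q + k * α * s = n + k * (Nat.gcd s q) by
        push_cast [hbez]; ring] at this
      exact this
    · exact fun hn => perSym_mono x (Nat.gcd_dvd_left s q) a hn
  tfae_have 3 → 4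
  · intro h a
    rw [h a]
    exact perSym_mono x (Nat.gcd_dvd_right s q) a
  tfae_have 4 → 5
  · intro h n hn
    exact perSym_mem_perAll (h (x n) (fun k => hn k))
  tfae_have 5 → 1
  · intro h a
    ext n
    rw [image_sub_mem]
    constructor
    · intro hn k
      have h1 : n + k * s ∈ PerSym x s a := perSym_shift hn k
      have h2 : n + k * s ∈ PerAll x q := h (perSym_mem_perAll h1)
      have := h2 1
      rw [perSym_val h1] at this
      rw [show n + (q : ℤ) + k * s = n + k * s + 1 * q by ring]
      exact this
    · intro hn k
      have h1 : n + q + k * s ∈ PerSym x s a := perSym_shift hn k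
      have h2 : n + q + k * s ∈ PerAll x q := h (perSym_mem_perAll h1)
      have := h2 (-1)
      rw [perSym_val h1] at this
      rw [show n + k * s = n + (q : ℤ) + k * s + (-1) * q by ring]
      exact this
  tfae_finish
end

section
/- Let G be an abelian group, A a nonempty finite alphabet, x ∈ A^G, g ∈ G, and let Γ ≤ G be a subgroup of finite index; let Γ' = ⟨Γ, g⟩ be the subgroup generated by Γ and g. The following are equivalent: (a) Per(x, Γ, a) = Per(x, Γ, a) − g for all a ∈ A; (b) Per(x, Γ, a) = Per(x, Γ, a) − γ' for all a ∈ A and all γ' ∈ Γ'; (c) Per(x, Γ, a) = Per(x, Γ', a) for all a ∈ A; (d) Per(x, Γ, a) ⊆ Per(x, Γ', a) for all a ∈ A; (e) Per(x, Γ) ⊆ Per(x, Γ'). -/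
private lemma img_eq_iff' {G : Type*} [AddCommGroup G] (S : Set G) (γ : G) :
    (fun p => p - γ) '' S = S ↔ ∀ h, h + γ ∈ S ↔ h ∈ S := by
  have himg : (fun p => p - γ) '' S = {h | h + γ ∈ S} := by
    ext y
    constructor
    · rintro ⟨p, hp, rfl⟩
      simpa using hp
    · intro hy
      exact ⟨y + γ, hy, by simp⟩
  rw [himg]
  exact Set.ext_iff

/-- `Per(x, Γ, a) = {h ∈ G : x(h + γ) = a for all γ ∈ Γ}`. -/
def PerGrp {G A : Type*} [AddCommGroup G] (x : G → A) (Γ : AddSubgroup G) (a : A) :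
    Set G :=
  {h : G | ∀ γ ∈ Γ, x (h + γ) = a}

/-- **Proposition.** Equivalent conditions relating periodicity data at scales `Γ` and
`Γ' = ⟨Γ, g⟩`. -/
theorem per_equiv_conditions_group
    {G : Type*} [AddCommGroup G] {A : Type*} [Fintype A] [Nonempty A]
    (x : G → A) (g : G) (Γ : AddSubgroup G) (hΓ : Γ.index ≠ 0) :
    List.TFAE
      [ ∀ a : A, PerGrp x Γ a = (fun p => p - g) '' PerGrp x Γ a,
        ∀ a : A, ∀ γ' ∈ Γ ⊔ AddSubgroup.closure {g},
          PerGrp x Γ a = (fun p => p - γ') '' PerGrp x Γ a,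
        ∀ a : A, PerGrp x Γ a = PerGrp x (Γ ⊔ AddSubgroup.closure {g}) a,
        ∀ a : A, PerGrp x Γ a ⊆ PerGrp x (Γ ⊔ AddSubgroup.closure {g}) a,
        (⋃ a : A, PerGrp x Γ a) ⊆ ⋃ a : A, PerGrp x (Γ ⊔ AddSubgroup.closure {g}) a ] := by
  have hgmem : g ∈ Γ ⊔ AddSubgroup.closure {g} :=
    AddSubgroup.mem_sup_right (AddSubgroup.subset_closure rfl)
  have hle : Γ ≤ Γ ⊔ AddSubgroup.closure {g} := le_sup_left
  tfae_have 1 → 2 := by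
    intro h1 a γ' hγ'
    refine ((img_eq_iff' _ γ').2 ?_).symm
    let H : AddSubgroup G :=
      { carrier := {γ | ∀ (b : A) (h : G), h + γ ∈ PerGrp x Γ b ↔ h ∈ PerGrp x Γ b}
        zero_mem' := by intro b h; simp
        add_mem' := by
          intro p q hp hq b h
          rw [← add_assoc, hq b (h + p), hp b h]
        neg_mem' := by
          intro p hp b h
          rw [← hp b (h + -p), neg_add_cancel_right]
      }
    have hΓH : Γ ≤ H := by
      intro γ hγ b h
      constructor
      · intro hm k hk
        have := hm (k - γ) (AddSubgroup.sub_mem Γ hk hγ)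
        simpa [add_assoc, add_sub_cancel] using this
      · intro hm k hk
        have := hm (γ + k) (AddSubgroup.add_mem Γ hγ hk)
        simpa [add_assoc] using this
    have hgH : g ∈ H := by
      intro b h
      exact (img_eq_iff' _ g).1 (h1 b).symm h
    have : Γ ⊔ AddSubgroup.closure {g} ≤ H :=
      sup_le hΓH (AddSubgroup.closure_le H |>.2 (by simpa using hgH))
    exact fun h => this hγ' a h
  tfae_have 2 → 3 := by
    intro h2 a
    ext h
    constructor
    · intro hm γ' hγ'
      have h' : h + γ' ∈ PerGrp x Γ a :=
        ((img_eq_iff' _ γ').1 (h2 a γ' hγ').symm h).2 hm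
      have := h' 0 (AddSubgroup.zero_mem Γ)
      simpa using this
    · intro hm γ hγ
      exact hm γ (hle hγ)
  tfae_have 3 → 4 := fun h3 a => (h3 a).le
  tfae_have 4 → 5 := fun h4 => Set.iUnion_mono h4
  tfae_have 5 → 1 := by
    intro h5 a
    refine ((img_eq_iff' _ g).2 ?_).symm
    intro h
    have key : ∀ k : G, k ∈ PerGrp x Γ a → k ∈ PerGrp x (Γ ⊔ AddSubgroup.closure {g}) a := by
      intro k hk
      have : k ∈ ⋃ b : A, PerGrp x (Γ ⊔ AddSubgroup.closure {g}) b :=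
        h5 (Set.mem_iUnion.2 ⟨a, hk⟩)
      obtain ⟨b, hb⟩ := Set.mem_iUnion.1 this
      have hba : b = a := by
        have h1 := hb 0 (AddSubgroup.zero_mem _)
        have h2 := hk 0 (AddSubgroup.zero_mem Γ)
        simp only [add_zero] at h1 h2
        rw [← h1, h2]
      exact hba ▸ hb
    constructor
    · intro hm γ hγ
      have hk := key (h + g) hm
      have := hk (-g + γ) (AddSubgroup.add_mem _ (AddSubgroup.neg_mem _ hgmem) (hle hγ))
      simpa [add_assoc] using this
    · intro hm γ hγ
      have hk := key h hm
      have := hk (g + γ) (AddSubgroup.add_mem _ hgmem (hle hγ))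
      simpa [add_assoc] using this
  tfae_finish
end

section
/- Let G be a finitely generated abelian group, A a nonempty finite alphabet, x ∈ A^G, and let Γ ≤ G be a subgroup of finite index with Per(x, Γ) ≠ ∅. Then the following are equivalent: (1) Γ is a group generated by essential periods of x, i.e., for every subgroup Γ' ≤ G, Per(x, Γ) ⊆ Per(x, Γ') implies Γ' ⊆ Γ; (2) Γ is an essential group of periods of x, i.e., for every g ∈ G, if Per(x, Γ, a) ⊆ Per(x, Γ, a) − g for all a ∈ A, then g ∈ Γ. -/
lemma perGrp_add_mem {G A : Type*} [AddCommGroup G] (x : G → A) (Γ : AddSubgroup G) (a : A)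
    {h γ : G} (hh : h ∈ PerGrp x Γ a) (hγ : γ ∈ Γ) : h + γ ∈ PerGrp x Γ a := by
  intro δ hδ
  rw [add_assoc]
  exact hh _ (Γ.add_mem hγ hδ)

lemma perGrp_nsmul {G A : Type*} [AddCommGroup G] (x : G → A) (Γ : AddSubgroup G) (a : A)
    {g : G} (hg : ∀ h ∈ PerGrp x Γ a, h + g ∈ PerGrp x Γ a) (k : ℕ) :
    ∀ h ∈ PerGrp x Γ a, h + k • g ∈ PerGrp x Γ a := by
  induction k with
  | zero => simpa using fun h hh => hh
  | succ n ih =>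
    intro h hh
    have := hg _ (ih h hh)
    have e : h + g + n • g = h + (n + 1) • g := by
      rw [add_nsmul, one_nsmul]; abel
    have := hg _ (ih h hh)
    rw [show h + (n + 1) • g = (h + n • g) + g by rw [add_nsmul, one_nsmul]; abel]
    exact hg _ (ih h hh)

lemma perGrp_zsmul {G A : Type*} [AddCommGroup G] (x : G → A) (Γ : AddSubgroup G) (a : A)
    {g : G} (hg : ∀ h ∈ PerGrp x Γ a, h + g ∈ PerGrp x Γ a)
    {m : ℕ} (hm : 0 < m) (hmg : m • g ∈ Γ) (n : ℤ) :
    ∀ h ∈ PerGrp x Γ a, h + n • g ∈ PerGrp x Γ a := by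
  intro h hh
  set t : ℕ := n.natAbs with ht
  have htm : t ≤ t * m := Nat.le_mul_of_pos_right t hm
  have hnn : 0 ≤ n + (t * m : ℕ) := by omega
  set k : ℕ := (n + (t * m : ℕ)).toNat with hk
  have hkz : (k : ℤ) = n + (t * m : ℕ) := Int.toNat_of_nonneg hnn
  have h1 : h + k • g ∈ PerGrp x Γ a := perGrp_nsmul x Γ a hg k h hh
  have hΓt : (t * m : ℕ) • g ∈ Γ := by
    simpa [mul_comm, mul_nsmul] using AddSubgroup.nsmul_mem Γ hmg t
  have h2 : (-((t * m : ℕ) : ℤ)) • g ∈ Γ := by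
    rw [neg_zsmul, natCast_zsmul]
    exact Γ.neg_mem hΓt
  have e : h + n • g = (h + k • g) + (-((t * m : ℕ) : ℤ)) • g := by
    have hkg : (k : ℕ) • g = n • g + ((t * m : ℕ) : ℤ) • g := by
      rw [← natCast_zsmul, hkz, add_zsmul]
    rw [hkg, neg_zsmul]
    abel
  rw [e]
  exact perGrp_add_mem x Γ a h1 h2

/-- **Corollary.** For a finitely generated abelian group, "group generated by essential
periods" and "essential group of periods" are the same notion. -/
theorem essential_periods_equiv
    {G : Type*} [AddCommGroup G] [AddGroup.FG G]
    {A : Type*} [Fintype A] [Nonempty A]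
    (x : G → A) (Γ : AddSubgroup G) (hΓ : Γ.index ≠ 0)
    (hper : (⋃ a : A, PerGrp x Γ a).Nonempty) :
    ((∀ Γ' : AddSubgroup G,
        (⋃ a : A, PerGrp x Γ a) ⊆ (⋃ a : A, PerGrp x Γ' a) → Γ' ≤ Γ)
      ↔
     (∀ g : G, (∀ a : A, PerGrp x Γ a ⊆ (fun p => p - g) '' PerGrp x Γ a) → g ∈ Γ)) := by
  constructor
  · -- (1) → (2)
    intro H g hg
    -- finite quotient: some positive multiple of g lies in Γ
    have hfin : Finite (G ⧸ Γ) := (Nat.card_ne_zero.mp hΓ).2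
    set m : ℕ := addOrderOf ((g : G) : G ⧸ Γ) with hmdef
    have hm : 0 < m := addOrderOf_pos _
    have hmg : m • g ∈ Γ := by
      have : m • ((g : G) : G ⧸ Γ) = 0 := addOrderOf_nsmul_eq_zero _
      rwa [← QuotientAddGroup.mk_nsmul, QuotientAddGroup.eq_zero_iff] at this
    -- each Per(x,Γ,a) is closed under +g
    have hstep : ∀ a : A, ∀ h ∈ PerGrp x Γ a, h + g ∈ PerGrp x Γ a := by
      intro a h hh
      obtain ⟨p, hp, hpe⟩ := hg a hh
      have hpg : h + g = p := by
        have : p - g = h := hpe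
        rw [← this]; abel
      rwa [hpg]
    -- consider Γ' = Γ ⊔ ⟨g⟩
    have key : (⋃ a : A, PerGrp x Γ a) ⊆
        (⋃ a : A, PerGrp x (Γ ⊔ AddSubgroup.zmultiples g) a) := by
      intro h hh
      obtain ⟨a, ha⟩ := Set.mem_iUnion.mp hh
      refine Set.mem_iUnion.mpr ⟨a, ?_⟩
      intro δ hδ
      rw [AddSubgroup.mem_sup] at hδ
      obtain ⟨γ, hγ, z, hz, rfl⟩ := hδ
      obtain ⟨n, rfl⟩ := AddSubgroup.mem_zmultiples_iff.mp hz
      have h1 : h + γ ∈ PerGrp x Γ a := perGrp_add_mem x Γ a ha hγ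
      have h2 : h + γ + n • g ∈ PerGrp x Γ a :=
        perGrp_zsmul x Γ a (hstep a) hm hmg n _ h1
      have := h2 0 Γ.zero_mem
      rwa [add_zero, show h + γ + n • g = h + (γ + n • g) by abel] at this
    have := H _ key
    exact this (AddSubgroup.mem_sup_right (AddSubgroup.mem_zmultiples g))
  · -- (2) → (1)
    intro H Γ' hsub g hg
    apply H g
    intro a h hh
    refine ⟨h + g, ?_, by simp⟩
    intro γ hγ
    have hhg : h + γ ∈ PerGrp x Γ a := perGrp_add_mem x Γ a hh hγ
    have : h + γ ∈ ⋃ b : A, PerGrp x Γ' b := hsub (Set.mem_iUnion.mpr ⟨a, hhg⟩)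
    obtain ⟨b, hb⟩ := Set.mem_iUnion.mp this
    have hba : b = a := by
      have h1 : x (h + γ + 0) = b := hb 0 Γ'.zero_mem
      have h2 : x (h + γ + 0) = a := hhg 0 Γ.zero_mem
      rw [h1] at h2; exact h2
    have := hb g hg
    rw [hba] at this
    rwa [show h + g + γ = h + γ + g by abel]
end

section
/- Let B ⊆ {2,3,…} be primitive, and assume that η is a Toeplitz sequence. Let d ∈ ℕ and 1 ≤ r ≤ d. If r + dℤ ⊆ M_B, then there exists b ∈ B such that b divides gcd(r, d). -/
namespace BFreeZ

/-- The set of multiples `M_B = ⋃_{b ∈ B} bℤ` of `B ⊆ ℕ`. -/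
def MBZ (B : Set ℕ) : Set ℤ := {n : ℤ | ∃ b ∈ B, (b : ℤ) ∣ n}

open Classical in
/-- The indicator function `η` of the `B`-free integers. -/
noncomputable def etaZ (B : Set ℕ) : ℤ → Bool :=
  fun n => if n ∈ MBZ B then false else true

/-- `Per(x, s) = {n ∈ ℤ : x(n + ks) = x(n) for all k ∈ ℤ}`. -/
def PerZ {A : Type*} (x : ℤ → A) (s : ℕ) : Set ℤ :=
  {n : ℤ | ∀ k : ℤ, x (n + k * s) = x n}

/-- `x` is a Toeplitz sequence. -/
def IsToeplitzZ {A : Type*} (x : ℤ → A) : Prop :=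
  ∀ n : ℤ, ∃ s : ℕ, 0 < s ∧ n ∈ PerZ x s

/-- `B ⊆ ℕ` is primitive: no element divides another one. -/
def PrimitiveZ (B : Set ℕ) : Prop :=
  ∀ b ∈ B, ∀ b' ∈ B, b ≠ b' → ¬ b ∣ b'

/-- The set `D` of `d ∈ ℕ` such that `d·C ⊆ B` for some infinite pairwise coprime set `C`
of integers greater than `1`. -/
def DZ (B : Set ℕ) : Set ℕ :=
  {d : ℕ | 0 < d ∧ ∃ C : Set ℕ, C.Infinite ∧ (∀ c ∈ C, 1 < c) ∧
    (∀ c ∈ C, ∀ c' ∈ C, c ≠ c' → Nat.Coprime c c') ∧ ∀ c ∈ C, d * c ∈ B}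

end BFreeZ

namespace BFreeZ

/-- **Theorem.** If `η` is Toeplitz and `r + dℤ ⊆ M_B` (with `1 ≤ r ≤ d`), then some
`b ∈ B` divides `gcd(r, d)`. -/
theorem ap_in_multiples_toeplitz
    (B : Set ℕ) (hB2 : ∀ b ∈ B, 2 ≤ b) (hprim : PrimitiveZ B)
    (htoe : IsToeplitzZ (etaZ B))
    (d r : ℕ) (hr1 : 1 ≤ r) (hrd : r ≤ d)
    (h : ∀ k : ℤ, (r : ℤ) + d * k ∈ MBZ B) :
    ∃ b ∈ B, b ∣ Nat.gcd r d := by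
  by_contra hcon
  push_neg at hcon
  set g := Nat.gcd r d with hgdef
  -- `g` is B-free
  have hgF : ((g : ℕ) : ℤ) ∉ MBZ B := by
    rintro ⟨b, hb, hdvd⟩
    exact hcon b hb (Int.ofNat_dvd.mp hdvd)
  obtain ⟨s, hs0, hper⟩ := htoe (g : ℤ)
  have hgeta : etaZ B (g : ℤ) = true := by
    simp only [etaZ, if_neg hgF]
  have hfree : ∀ k : ℤ, ((g : ℤ) + k * s) ∉ MBZ B := by
    intro k hmem
    have h1 := hper k
    rw [hgeta] at h1
    simp only [etaZ, if_pos hmem] at h1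
    exact Bool.false_ne_true h1
  -- Claim A : for every b ∈ B, gcd s b does not divide g
  have claimA : ∀ b ∈ B, ¬ (Nat.gcd s b ∣ g) := by
    intro b hb hq
    obtain ⟨g', hg'⟩ := hq
    have hbez := Int.gcd_eq_gcd_ab (s : ℤ) (b : ℤ)
    have hgcd : (Int.gcd (s : ℤ) (b : ℤ) : ℤ) = (Nat.gcd s b : ℤ) := by
      rw [Int.gcd_natCast_natCast]
    set A := Int.gcdA (s : ℤ) (b : ℤ) with hA
    set Bc := Int.gcdB (s : ℤ) (b : ℤ) with hBc
    have hbez' : (Nat.gcd s b : ℤ) = s * A + b * Bc := by rw [← hgcd, hbez]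
    have key : (g : ℤ) + (-(g' * A)) * s = (b : ℤ) * ((g' : ℤ) * Bc) := by
      have h1 : (g : ℤ) = (Nat.gcd s b : ℤ) * (g' : ℤ) := by exact_mod_cast hg'
      rw [h1, hbez']; ring
    exact hfree (-(g' * A)) ⟨b, hb, ⟨(g' : ℤ) * Bc, key⟩⟩
  -- the construction
  set t := Nat.gcd s d with htdef
  set h0 := Nat.gcd r t with hh0def
  have hh0 : 0 < h0 := Nat.gcd_pos_of_pos_left _ hr1
  set r1 := r / h0 with hr1def
  set t1 := t / h0 with ht1def
  have hr1e : h0 * r1 = r := Nat.mul_div_cancel' (Nat.gcd_dvd_left r t)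
  have ht1e : h0 * t1 = t := Nat.mul_div_cancel' (Nat.gcd_dvd_right r t)
  have hcop : Nat.Coprime r1 t1 := Nat.coprime_div_gcd_div_gcd hh0
  set F := s.primeFactors.filter (fun p => ¬ p ∣ r1) with hF
  set k0 := ∏ p ∈ F, p with hk0
  -- Claim B : r1 + t1 * k0 is coprime to s
  have claimB : Nat.Coprime (r1 + t1 * k0) s := by
    by_contra hnc
    obtain ⟨p, hp, hpx, hps⟩ := Nat.Prime.not_coprime_iff_dvd.mp hnc
    have hpF : p ∣ k0 → p ∈ F := by
      intro hdk
      have hprime : Prime p := hp.prime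
      obtain ⟨q, hqF, hpq⟩ := (Prime.dvd_finset_prod_iff hprime _).mp hdk
      have hq : q.Prime := Nat.prime_of_mem_primeFactors (Finset.mem_filter.mp hqF).1
      rwa [(Nat.prime_dvd_prime_iff_eq hp hq).mp hpq]
    by_cases hpr : p ∣ r1
    · have hpt : p ∣ t1 * k0 := (Nat.dvd_add_right hpr).mp hpx
      rcases (Nat.Prime.dvd_mul hp).mp hpt with h' | h'
      · have : p ∣ Nat.gcd r1 t1 := Nat.dvd_gcd hpr h'
        rw [hcop] at this
        exact hp.ne_one (Nat.dvd_one.mp this)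
      · exact (Finset.mem_filter.mp (hpF h')).2 hpr
    · have hpk : p ∣ k0 := Finset.dvd_prod_of_mem _ (by
        refine Finset.mem_filter.mpr ⟨Nat.mem_primeFactors.mpr ⟨hp, hps, hs0.ne'⟩, hpr⟩)
      have hpt : p ∣ t1 * k0 := Dvd.dvd.mul_left hpk t1
      exact hpr ((Nat.dvd_add_right hpt).mp (by rwa [add_comm] at hpx))
  set x0 := r + t * k0 with hx0
  -- Claim C : gcd x0 s ∣ g
  have claimC : Nat.gcd x0 s ∣ g := by
    have hx0' : x0 = h0 * (r1 + t1 * k0) := by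
      rw [hx0, Nat.mul_add, hr1e, ← mul_assoc, ht1e]
    set w := Nat.gcd x0 s with hw
    have hws : w ∣ s := Nat.gcd_dvd_right _ _
    have hwx : w ∣ h0 * (r1 + t1 * k0) := hx0' ▸ Nat.gcd_dvd_left _ _
    have hcw : Nat.Coprime w (r1 + t1 * k0) :=
      Nat.Coprime.coprime_dvd_left hws claimB.symm
    have hwh : w ∣ h0 := Nat.Coprime.dvd_of_dvd_mul_right hcw hwx
    exact hwh.trans (Nat.dvd_gcd (Nat.gcd_dvd_left r t)
      ((Nat.gcd_dvd_right r t).trans (Nat.gcd_dvd_right s d)))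
  -- Bezout for t = gcd s d, written as d*α + s*β
  have hbez2 := Int.gcd_eq_gcd_ab (d : ℤ) (s : ℤ)
  set α := Int.gcdA (d : ℤ) (s : ℤ) with hα
  set β := Int.gcdB (d : ℤ) (s : ℤ) with hβ
  have htZ : (t : ℤ) = d * α + s * β := by
    rw [htdef]
    rw [Nat.gcd_comm s d]
    rw [← Int.gcd_natCast_natCast d s, hbez2]
  obtain ⟨b, hb, hbd⟩ := h (α * k0)
  have hq1 : ((Nat.gcd s b : ℕ) : ℤ) ∣ ((r : ℤ) + d * (α * k0)) :=
    dvd_trans (Int.ofNat_dvd.mpr (Nat.gcd_dvd_right s b)) hbd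
  have hq2 : ((Nat.gcd s b : ℕ) : ℤ) ∣ (s : ℤ) := Int.ofNat_dvd.mpr (Nat.gcd_dvd_left s b)
  have hx0eq : ((x0 : ℕ) : ℤ) = ((r : ℤ) + d * (α * k0)) + s * (β * k0) := by
    rw [hx0]
    push_cast
    rw [htZ]
    ring
  have hq3 : ((Nat.gcd s b : ℕ) : ℤ) ∣ ((x0 : ℕ) : ℤ) :=
    hx0eq ▸ dvd_add hq1 (hq2.mul_right _)
  have hq4 : Nat.gcd s b ∣ x0 := Int.ofNat_dvd.mp hq3
  exact claimA b hb ((Nat.dvd_gcd hq4 (Nat.gcd_dvd_left s b)).trans claimC)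

end BFreeZ
end

section
/- For all positive integers d and r, there exists an infinite set C of pairwise coprime positive integers such that gcd(r, d)·c ∈ r + dℤ for every c ∈ C. -/
/-- **Lemma.** For all positive integers `d, r` there is an infinite pairwise coprime set
`C` of positive integers with `gcd(r,d)·c ∈ r + dℤ` for every `c ∈ C`. -/
theorem gcd_multiples_in_ap (d r : ℕ) (hd : 0 < d) (hr : 0 < r) :
    ∃ C : Set ℕ, C.Infinite ∧ (∀ c ∈ C, 0 < c) ∧
      (∀ c ∈ C, ∀ c' ∈ C, c ≠ c' → Nat.Coprime c c') ∧
      (∀ c ∈ C, ∃ k : ℤ, (Nat.gcd r d : ℤ) * c = (r : ℤ) + d * k) := by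
  set g := Nat.gcd r d with hg
  have hgpos : 0 < g := Nat.gcd_pos_of_pos_left d hr
  set r' := r / g with hr'
  set d' := d / g with hd'
  have hgr : g * r' = r := Nat.mul_div_cancel' (Nat.gcd_dvd_left r d)
  have hgd : g * d' = d := Nat.mul_div_cancel' (Nat.gcd_dvd_right r d)
  have hd'pos : 0 < d' := Nat.div_pos (Nat.le_of_dvd hd (Nat.gcd_dvd_right r d)) hgpos
  haveI : NeZero d' := ⟨hd'pos.ne'⟩
  have hcop : Nat.Coprime r' d' := Nat.coprime_div_gcd_div_gcd hgpos
  have hunit : IsUnit ((r' : ZMod d')) := (ZMod.isUnit_iff_coprime r' d').mpr hcop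
  refine ⟨{p : ℕ | p.Prime ∧ (p : ZMod d') = (r' : ZMod d')},
    Nat.infinite_setOfPred_prime_and_eq_mod hunit, fun c hc => hc.1.pos,
    fun c hc c' hc' hne => (Nat.coprime_primes hc.1 hc'.1).mpr hne, ?_⟩
  rintro c ⟨hcp, hceq⟩
  have hmod : c ≡ r' [MOD d'] := (ZMod.natCast_eq_natCast_iff c r' d').mp hceq
  obtain ⟨k, hk⟩ := hmod.dvd
  refine ⟨-k, ?_⟩
  have h1 : (r' : ℤ) - c = d' * k := hk
  have hgr' : (g : ℤ) * r' = r := by exact_mod_cast congrArg (Nat.cast : ℕ → ℤ) hgr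
  have hgd' : (g : ℤ) * d' = d := by exact_mod_cast congrArg (Nat.cast : ℕ → ℤ) hgd
  have : (g : ℤ) * c = g * r' - g * (d' * k) := by rw [← mul_sub, ← h1]; ring
  rw [this, hgr', ← mul_assoc, hgd']
  ring
end

section
/- Let B ⊆ ℕ be such that there exist no d ∈ ℕ and no infinite set C of pairwise coprime integers greater than 1 with dc ∈ B for all c ∈ C. If d ∈ ℕ and C is an infinite set of pairwise coprime integers greater than 1 with dc ∈ M_B for all c ∈ C, then d ∈ M_B. -/
/-- **Lemma.** Suppose `B ⊆ ℕ` contains no scaled copy `d·C` of an infinite pairwise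
coprime set `C` of integers `> 1`. If `d·C ⊆ M_B` for some `d ∈ ℕ` and some infinite
pairwise coprime set `C` of integers `> 1`, then `d ∈ M_B`. -/
theorem scaled_coprime_in_multiples (B : Set ℕ)
    (hD : ¬ ∃ d : ℕ, 0 < d ∧ ∃ C : Set ℕ, C.Infinite ∧ (∀ c ∈ C, 1 < c) ∧
      (∀ c ∈ C, ∀ c' ∈ C, c ≠ c' → Nat.Coprime c c') ∧ ∀ c ∈ C, d * c ∈ B)
    (d : ℕ) (hd : 0 < d) (C : Set ℕ) (hCinf : C.Infinite) (hC1 : ∀ c ∈ C, 1 < c)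
    (hCcop : ∀ c ∈ C, ∀ c' ∈ C, c ≠ c' → Nat.Coprime c c')
    (hmul : ∀ c ∈ C, ∃ b ∈ B, b ∣ d * c) :
    ∃ b ∈ B, b ∣ d := by
  classical
  choose! b hbB hbdvd using hmul
  by_contra hno
  push_neg at hno
  haveI : Infinite C := hCinf.to_subtype
  have hGmem : ∀ c : C, Nat.gcd (b c) d ∈ d.divisors := fun c =>
    Nat.mem_divisors.mpr ⟨Nat.gcd_dvd_right _ _, hd.ne'⟩
  obtain ⟨e, he⟩ := Finite.exists_infinite_fiber
    (fun c : C => (⟨Nat.gcd (b ↑c) d, hGmem c⟩ : d.divisors))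
  set g : ℕ := e.val with hg
  have hgd : g ∣ d := (Nat.mem_divisors.mp e.2).1
  have hgpos : 0 < g := Nat.pos_of_dvd_of_pos hgd hd
  set S : Set ℕ := Subtype.val '' {c : C | Nat.gcd (b ↑c) d = g} with hS
  have hScC : S ⊆ C := by
    rintro x ⟨c, _, rfl⟩; exact c.2
  have hSinf : S.Infinite := by
    have h1 : ({c : C | Nat.gcd (b ↑c) d = g}).Infinite := by
      rw [← Set.infinite_coe_iff]
      have : ((fun c : C => (⟨Nat.gcd (b ↑c) d, hGmem c⟩ : d.divisors)) ⁻¹' {e})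
          = {c : C | Nat.gcd (b ↑c) d = g} := by
        ext c; simp [Subtype.ext_iff, hg]
      rw [← this]; exact he
    exact h1.image (Set.injOn_of_injective Subtype.val_injective)
  have hkey : ∀ x ∈ S, Nat.gcd (b x) d = g := by
    rintro x ⟨c, hc, rfl⟩; exact hc
  set f : ℕ → ℕ := fun x => b x / g with hf
  have hgb : ∀ x ∈ S, g ∣ b x := fun x hx => (hkey x hx) ▸ Nat.gcd_dvd_left _ _
  have hbf : ∀ x ∈ S, g * f x = b x := fun x hx => Nat.mul_div_cancel' (hgb x hx)
  have hfdvd : ∀ x ∈ S, f x ∣ x := by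
    intro x hx
    have hxC := hScC hx
    have hcop : Nat.Coprime (f x) (d / g) := by
      have := Nat.coprime_div_gcd_div_gcd (m := b x) (n := d) ((hkey x hx) ▸ hgpos)
      rwa [hkey x hx] at this
    have hdx : d * x = g * ((d / g) * x) := by
      rw [← mul_assoc, Nat.mul_div_cancel' hgd]
    have : g * f x ∣ g * ((d / g) * x) := by
      rw [hbf x hx, ← hdx]; exact hbdvd x hxC
    exact hcop.dvd_of_dvd_mul_left ((mul_dvd_mul_iff_left hgpos.ne').mp this)
  have hf1 : ∀ x ∈ S, 1 < f x := by
    intro x hx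
    have hxC := hScC hx
    have hbne : b x ≠ 0 := by
      intro h0
      have : d * x = 0 := Nat.eq_zero_of_zero_dvd (h0 ▸ hbdvd x hxC)
      have hx1 := hC1 x hxC
      exact Nat.mul_ne_zero hd.ne' (by omega) this
    have hfne0 : f x ≠ 0 := by
      intro h0
      have := hbf x hx
      rw [h0, mul_zero] at this
      exact hbne this.symm
    have hfne1 : f x ≠ 1 := by
      intro h1
      have : b x = g := by rw [← hbf x hx, h1, mul_one]
      exact hno (b x) (hbB x hxC) (this ▸ hgd)
    omega
  refine hD ⟨g, hgpos, f '' S, ?_, ?_, ?_, ?_⟩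
  · apply hSinf.image
    intro x hx y hy hxy
    by_contra hne
    have hcop := hCcop x (hScC hx) y (hScC hy) hne
    have : f x ∣ Nat.gcd x y := Nat.dvd_gcd (hfdvd x hx) (hxy ▸ hfdvd y hy)
    rw [hcop] at this
    exact absurd (Nat.eq_one_of_dvd_one this) (by have := hf1 x hx; omega)
  · rintro _ ⟨x, hx, rfl⟩; exact hf1 x hx
  · rintro _ ⟨x, hx, rfl⟩ _ ⟨y, hy, rfl⟩ hne
    have hxy : x ≠ y := fun h => hne (by rw [h])
    have hcop := hCcop x (hScC hx) y (hScC hy) hxy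
    exact Nat.Coprime.coprime_dvd_left (hfdvd x hx)
      (Nat.Coprime.coprime_dvd_right (hfdvd y hy) hcop)
  · rintro _ ⟨x, hx, rfl⟩
    rw [hbf x hx]; exact hbB x (hScC hx)
end

section
/- Let B ⊆ {2,3,…} be primitive and let (S_i)_{i≥1} be a saturated filtration of B by finite nonempty subsets. Then ℤ \ ⋃_{i≥1} Per(η, lcm(S_i)) = M_D ∩ F_B = ℤ \ ⋃_{s≥1} Per(η, s). -/
namespace BFreeZ

lemma etaZ_eq_false {B : Set ℕ} {m : ℤ} (h : m ∈ MBZ B) : etaZ B m = false := by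
  simp [etaZ, h]

lemma etaZ_eq_true {B : Set ℕ} {m : ℤ} (h : m ∉ MBZ B) : etaZ B m = true := by
  simp [etaZ, h]

/-- If `n ∈ M_D ∩ F_B` then `n` is not periodic for any period `s > 0`. -/
lemma not_mem_per (B : Set ℕ) {n : ℤ} (hn : n ∈ MBZ (DZ B)) (hnf : n ∉ MBZ B)
    {s : ℕ} (hs : 0 < s) : n ∉ PerZ (etaZ B) s := by
  obtain ⟨d, ⟨hd0, C, hCinf, hC1, hCcop, hCB⟩, hdn⟩ := hn
  have hds : d * s ≠ 0 := by positivity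
  -- the set of `c ∈ C` not coprime to `d*s` is finite
  have hTfin : {c | c ∈ C ∧ ¬ Nat.Coprime c (d * s)}.Finite := by
    have hsub : {c | c ∈ C ∧ ¬ Nat.Coprime c (d * s)} ⊆
        ⋃ p ∈ (d * s).primeFactors, {c | c ∈ C ∧ p ∣ c} := by
      rintro c ⟨hcC, hcop⟩
      have hg : Nat.gcd c (d * s) ≠ 1 := hcop
      have hpp : (Nat.gcd c (d * s)).minFac.Prime := Nat.minFac_prime hg
      have hpdvd : (Nat.gcd c (d * s)).minFac ∣ Nat.gcd c (d * s) := Nat.minFac_dvd _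
      refine Set.mem_biUnion ?_ ⟨hcC, hpdvd.trans (Nat.gcd_dvd_left _ _)⟩
      exact Nat.mem_primeFactors.mpr ⟨hpp, hpdvd.trans (Nat.gcd_dvd_right _ _), hds⟩
    refine Set.Finite.subset (Set.Finite.biUnion ((d * s).primeFactors.finite_toSet)
      (fun p hp => ?_)) hsub
    refine Set.Subsingleton.finite ?_
    rintro c ⟨hcC, hpc⟩ c' ⟨hc'C, hpc'⟩
    by_contra hne
    have hcc' := hCcop c hcC c' hc'C hne
    have hpprime : p.Prime := (Nat.prime_of_mem_primeFactors hp)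
    have : p ∣ Nat.gcd c c' := Nat.dvd_gcd hpc hpc'
    rw [hcc'] at this
    exact Nat.Prime.one_lt hpprime |>.ne' (Nat.le_antisymm (Nat.le_of_dvd one_pos this)
      (Nat.one_le_iff_ne_zero.mpr hpprime.ne_zero))
  obtain ⟨c, hcC, hcT⟩ := (hCinf.diff hTfin).nonempty
  have hcop : Nat.Coprime c (d * s) := by
    by_contra h
    exact hcT ⟨hcC, h⟩
  have hicop : IsCoprime ((d * s : ℕ) : ℤ) (c : ℤ) :=
    Nat.isCoprime_iff_coprime.mpr hcop.symm
  obtain ⟨u, v, huv⟩ := hicop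
  obtain ⟨n', hn'⟩ := hdn
  intro hper
  have hk := hper (-(n * u) * d)
  have hkey : ((d * c : ℕ) : ℤ) ∣ n + (-(n * u) * d) * s := by
    refine ⟨n' * v, ?_⟩
    rw [hn']
    push_cast at huv ⊢
    linear_combination (-((d : ℤ) * n')) * huv
  rw [etaZ_eq_false ⟨d * c, hCB c hcC, hkey⟩, etaZ_eq_true hnf] at hk
  exact Bool.false_ne_true hk

/-- If `n ∈ M_B` then `n` is periodic with period `lcm(Sᵢ)` as soon as `Sᵢ` contains
a divisor of `n` from `B`. -/
lemma exists_per_of_mult (B : Set ℕ) (S : ℕ → Finset ℕ)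
    (hunion : (⋃ i, (S i : Set ℕ)) = B) {n : ℤ} (hn : n ∈ MBZ B) :
    ∃ i, n ∈ PerZ (etaZ B) ((S i).lcm id) := by
  obtain ⟨b, hbB, hbn⟩ := hn
  have hb : b ∈ ⋃ i, (S i : Set ℕ) := hunion ▸ hbB
  obtain ⟨i, hi⟩ := Set.mem_iUnion.mp hb
  refine ⟨i, fun k => ?_⟩
  have hbl : ((b : ℕ) : ℤ) ∣ (((S i).lcm id : ℕ) : ℤ) :=
    Int.natCast_dvd_natCast.mpr (Finset.dvd_lcm hi)
  have h1 : n + k * ((S i).lcm id) ∈ MBZ B :=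
    ⟨b, hbB, dvd_add hbn (Dvd.dvd.mul_left hbl k)⟩
  rw [etaZ_eq_false h1, etaZ_eq_false ⟨b, hbB, hbn⟩]

/-- Hard case: if `n ∉ M_B` and `n ∉ M_D`, then `n` is periodic with some period `lcm(Sᵢ)`. -/
lemma exists_per_of_not_mem (B : Set ℕ) (hB2 : ∀ b ∈ B, 2 ≤ b)
    (S : ℕ → Finset ℕ) (hne : ∀ i, (S i).Nonempty) (hsub : ∀ i, (S i : Set ℕ) ⊆ B)
    (hmono : ∀ i, S i ⊆ S (i + 1)) (hunion : (⋃ i, (S i : Set ℕ)) = B)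
    {n : ℤ} (hnB : n ∉ MBZ B) (hnD : n ∉ MBZ (DZ B)) :
    ∃ i, n ∈ PerZ (etaZ B) ((S i).lcm id) := by
  by_contra hcon
  push_neg at hcon
  have hmonoS : ∀ i j, i ≤ j → S i ⊆ S j := by
    intro i j hij
    induction j with
    | zero => simpa [Nat.le_zero.mp hij]
    | succ j ih =>
      rcases Nat.lt_or_ge i (j + 1) with h | h
      · exact (ih (Nat.lt_succ_iff.mp h)).trans (hmono j)
      · have : i = j + 1 := le_antisymm hij h
        simp [this]
  -- for every `i` there is a translate of `n` by a multiple of `lcm(Sᵢ)` in `M_B`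
  have hex : ∀ i, ∃ k : ℤ, ∃ b, b ∈ B ∧ (b : ℤ) ∣ n + k * ((S i).lcm id) := by
    intro i
    have hni := hcon i
    simp only [PerZ, Set.mem_setOf_eq, not_forall] at hni
    obtain ⟨k, hk⟩ := hni
    refine ⟨k, ?_⟩
    by_contra h
    push_neg at h
    have hmem : n + k * ((S i).lcm id) ∉ MBZ B := by
      rintro ⟨b, hb, hd⟩
      exact h b hb hd
    exact hk (by rw [etaZ_eq_true hmem, etaZ_eq_true hnB])
  choose k bf hbfB hbf using hex
  have hn0 : n ≠ 0 := by
    rintro rfl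
    obtain ⟨b, hb⟩ := hne 0
    exact hnB ⟨b, hsub 0 hb, dvd_zero _⟩
  set g : ℕ → ℕ := fun i => Nat.gcd (bf i) ((S i).lcm id) with hgdef
  have hgdvd : ∀ i, ((g i : ℕ) : ℤ) ∣ n := by
    intro i
    have h1 : ((g i : ℕ) : ℤ) ∣ n + k i * ((S i).lcm id) :=
      (Int.natCast_dvd_natCast.mpr (Nat.gcd_dvd_left _ _)).trans (hbf i)
    have h2 : ((g i : ℕ) : ℤ) ∣ k i * ((S i).lcm id) :=
      Dvd.dvd.mul_left (Int.natCast_dvd_natCast.mpr (Nat.gcd_dvd_right _ _)) _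
    have h3 := dvd_sub h1 h2
    simp only [add_sub_cancel_right] at h3
    exact h3
  have hbf2 : ∀ i, 2 ≤ bf i := fun i => hB2 _ (hbfB i)
  have hgpos : ∀ i, 0 < g i := fun i =>
    Nat.gcd_pos_of_pos_left _ (by have := hbf2 i; omega)
  have hgle : ∀ i, g i ≤ n.natAbs := by
    intro i
    have h1 : g i ∣ n.natAbs := Int.natCast_dvd.mp (hgdvd i)
    exact Nat.le_of_dvd (Int.natAbs_pos.mpr hn0) h1
  -- pigeonhole: some value `d` of `g` occurs infinitely often
  set F : ℕ → Fin (n.natAbs + 1) := fun i => ⟨g i, Nat.lt_succ_of_le (hgle i)⟩ with hFdef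
  obtain ⟨y, hy⟩ := Finite.exists_infinite_fiber F
  set d := (y : ℕ) with hddef
  have hI : {i : ℕ | g i = d}.Infinite := by
    have h1 : (F ⁻¹' {y}).Infinite := Set.infinite_coe_iff.mp hy
    refine h1.mono ?_
    intro i hi
    have : F i = y := hi
    simpa [hFdef, Fin.ext_iff, hddef] using this
  -- build a sequence of indices with the saturation property
  have hstep : ∀ j : ℕ, ∃ j', g j' = d ∧ j < j' ∧ bf j ∈ S j' := by
    intro j
    have hb : bf j ∈ ⋃ i, (S i : Set ℕ) := hunion ▸ hbfB j
    obtain ⟨j0, hj0⟩ := Set.mem_iUnion.mp hb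
    obtain ⟨j', hj'I, hj'gt⟩ := hI.exists_gt (max j j0)
    exact ⟨j', hj'I, lt_of_le_of_lt (le_max_left _ _) hj'gt,
      hmonoS j0 j' (le_of_lt (lt_of_le_of_lt (le_max_right _ _) hj'gt)) hj0⟩
  choose F2 hF2d hF2lt hF2mem using hstep
  obtain ⟨i0, hi0⟩ := hI.nonempty
  set seq : ℕ → ℕ := fun m => Nat.rec i0 (fun _ prev => F2 prev) m with hseqdef
  have hseqsucc : ∀ m, seq (m + 1) = F2 (seq m) := fun m => rfl
  have hseqI : ∀ m, g (seq m) = d := by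
    intro m
    induction m with
    | zero => exact hi0
    | succ m _ => exact hF2d (seq m)
  have hseqmono : StrictMono seq :=
    strictMono_nat_of_lt_succ (fun m => hF2lt (seq m))
  have hmemS : ∀ l m, l < m → bf (seq l) ∈ S (seq m) := by
    intro l m hlm
    have h1 : bf (seq l) ∈ S (seq (l + 1)) := hF2mem (seq l)
    exact hmonoS _ _ (hseqmono.monotone (Nat.succ_le_of_lt hlm)) h1
  have hdpos : 0 < d := by rw [← hseqI 0]; exact hgpos (seq 0)
  have hddvdbf : ∀ m, d ∣ bf (seq m) := fun m => (hseqI m) ▸ Nat.gcd_dvd_left _ _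
  have hddvdn : (d : ℤ) ∣ n := by rw [← hseqI 0]; exact hgdvd (seq 0)
  have hkey : ∀ l m, l < m → Nat.gcd (bf (seq l)) (bf (seq m)) = d := by
    intro l m hlm
    apply Nat.dvd_antisymm
    · have h1 : Nat.gcd (bf (seq l)) (bf (seq m)) ∣ (S (seq m)).lcm id :=
        (Nat.gcd_dvd_left _ _).trans (Finset.dvd_lcm (hmemS l m hlm))
      have h2 : Nat.gcd (bf (seq l)) (bf (seq m)) ∣ g (seq m) :=
        Nat.dvd_gcd (Nat.gcd_dvd_right (bf (seq l)) (bf (seq m))) h1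
      rwa [hseqI m] at h2
    · exact Nat.dvd_gcd (hddvdbf l) (hddvdbf m)
  set c : ℕ → ℕ := fun m => bf (seq m) / d with hcdef
  have hbc : ∀ m, bf (seq m) = d * c m := fun m => (Nat.mul_div_cancel' (hddvdbf m)).symm
  have hc1 : ∀ m, 1 < c m := by
    intro m
    by_contra h
    push_neg at h
    have h2 : 2 ≤ d * c m := by rw [← hbc m]; exact hbf2 (seq m)
    have hcm : c m = 0 ∨ c m = 1 := by omega
    rcases hcm with h0 | h1
    · rw [h0, Nat.mul_zero] at h2; omega
    · apply hnB
      refine ⟨bf (seq m), hbfB (seq m), ?_⟩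
      rw [hbc m, h1, Nat.mul_one]
      exact hddvdn
  have hcop : ∀ l m, l ≠ m → Nat.Coprime (c l) (c m) := by
    have key : ∀ l m, l < m → Nat.Coprime (c l) (c m) := by
      intro l m hlm
      have h1 : d * Nat.gcd (c l) (c m) = d * 1 := by
        rw [← Nat.gcd_mul_left, ← hbc l, ← hbc m, Nat.mul_one]
        exact hkey l m hlm
      exact Nat.eq_of_mul_eq_mul_left hdpos h1
    intro l m hlm
    rcases lt_or_gt_of_ne hlm with h | h
    · exact key l m h
    · exact (key m l h).symm
  have hcinj : Function.Injective c := by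
    intro l m h
    by_contra hne2
    have h1 := hcop l m hne2
    rw [h] at h1
    have h2 : c m = 1 := by rwa [Nat.Coprime, Nat.gcd_self] at h1
    have := hc1 m
    omega
  apply hnD
  refine ⟨d, ⟨hdpos, Set.range c, Set.infinite_range_of_injective hcinj, ?_, ?_, ?_⟩, hddvdn⟩
  · rintro x ⟨m, rfl⟩
    exact hc1 m
  · rintro x ⟨l, rfl⟩ x' ⟨m, rfl⟩ hne2
    exact hcop l m (fun h => hne2 (by rw [h]))
  · rintro x ⟨m, rfl⟩
    rw [← hbc m]
    exact hbfB (seq m)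

/-- **Proposition.** Non-periodic positions of `η` in dimension one:
`ℤ \ ⋃ᵢ Per(η, lcm(Sᵢ)) = M_D ∩ F_B = ℤ \ ⋃ₛ Per(η, s)`. -/
theorem nonperiodic_positions_one_dim
    (B : Set ℕ) (hB2 : ∀ b ∈ B, 2 ≤ b) (hprim : PrimitiveZ B)
    (S : ℕ → Finset ℕ)
    (hne : ∀ i, (S i).Nonempty) (hsub : ∀ i, (S i : Set ℕ) ⊆ B)
    (hmono : ∀ i, S i ⊆ S (i + 1)) (hunion : (⋃ i, (S i : Set ℕ)) = B)
    (hsat : ∀ i, {n : ℕ | ∃ b ∈ B, n = Nat.gcd b ((S i).lcm id)} ∩ B = (S i : Set ℕ)) :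
    (⋃ i, PerZ (etaZ B) ((S i).lcm id))ᶜ = MBZ (DZ B) ∩ (MBZ B)ᶜ ∧
    MBZ (DZ B) ∩ (MBZ B)ᶜ = (⋃ s ∈ {s : ℕ | 0 < s}, PerZ (etaZ B) s)ᶜ := by
  have hLpos : ∀ i, 0 < (S i).lcm id := by
    intro i
    rcases Nat.eq_zero_or_pos ((S i).lcm id) with h | h
    · exfalso
      rw [Finset.lcm_eq_zero_iff] at h
      obtain ⟨b, hb, hb0⟩ := h
      simp only [id] at hb0
      have := hB2 b (hsub i hb)
      omega
    · exact h
  have h2 : ∀ n : ℤ, n ∉ MBZ (DZ B) ∩ (MBZ B)ᶜ → ∃ i, n ∈ PerZ (etaZ B) ((S i).lcm id) := by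
    intro n hn
    by_cases hB : n ∈ MBZ B
    · exact exists_per_of_mult B S hunion hB
    · have hD : n ∉ MBZ (DZ B) := fun h => hn ⟨h, hB⟩
      exact exists_per_of_not_mem B hB2 S hne hsub hmono hunion hB hD
  constructor
  · ext n
    simp only [Set.mem_compl_iff, Set.mem_iUnion, not_exists, Set.mem_inter_iff]
    constructor
    · intro h
      by_contra hn
      have hn' : n ∉ MBZ (DZ B) ∩ (MBZ B)ᶜ := fun hm => hn ⟨hm.1, hm.2⟩
      obtain ⟨i, hi⟩ := h2 n hn'
      exact h i hi
    · rintro ⟨hD, hB⟩ i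
      exact not_mem_per B hD hB (hLpos i)
  · ext n
    simp only [Set.mem_compl_iff, Set.mem_iUnion, Set.mem_setOf_eq, not_exists,
      Set.mem_inter_iff]
    constructor
    · rintro ⟨hD, hB⟩ s hs
      exact not_mem_per B hD hB hs
    · intro h
      by_contra hn
      have hn' : n ∉ MBZ (DZ B) ∩ (MBZ B)ᶜ := fun hm => hn ⟨hm.1, hm.2⟩
      obtain ⟨i, hi⟩ := h2 n hn'
      exact h ((S i).lcm id) (hLpos i) hi

end BFreeZ
end
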